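/- Let G be a graph and let M be a nontrivial, unbounded graph matroid family with dimensionality d and threshold t. If G is k-connected, k-vertex-redundantly M-rigid, and has at least k + t vertices, then the matroid M(G) is vertically (k+1)-connected. -/

import Mathlib

/-!
Common framework: graph matroid families.

A finite simple graph (without isolated vertices) is identified with its edge
set: a finite set of non-diagonal elements of `Sym2 ℕ`.  A graph matroid
family is encoded, following the paper, as a finitary matroid on the edge set
of the countable complete graph on `ℕ` that is invariant under all
permutations of `ℕ`.
-/

/-- The set of vertices covered by a set of edges. -/
def eSupp (E : Set (Sym2 ℕ)) : Set ℕ := {v : ℕ | ∃ e ∈ E, v ∈ e}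

/-- The edge set of the complete graph on the vertex set `V`. -/
def clique (V : Set ℕ) : Set (Sym2 ℕ) := {e : Sym2 ℕ | ¬ e.IsDiag ∧ ∀ v ∈ e, v ∈ V}

/-- The edge set of the complete graph `K_n` on the vertices `0, …, n-1`. -/
def cliqueN (n : ℕ) : Set (Sym2 ℕ) := clique {v : ℕ | v < n}

/-- `E` is (the edge set of) a finite simple graph. -/
def IsGraph (E : Set (Sym2 ℕ)) : Prop := E.Finite ∧ ∀ e ∈ E, ¬ e.IsDiag

/-- The degree of the vertex `v` in the edge set `E`. -/
noncomputable def deg (E : Set (Sym2 ℕ)) (v : ℕ) : ℕ := {e ∈ E | v ∈ e}.ncard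

/-- The minimum degree of (the graph with) edge set `E` (whose vertex set is `eSupp E`). -/
noncomputable def minDeg (E : Set (Sym2 ℕ)) : ℕ := sInf {k : ℕ | ∃ v ∈ eSupp E, deg E v = k}

/-- Deleting a set `S` of vertices from the graph with edge set `E`. -/
def deleteVerts (E : Set (Sym2 ℕ)) (S : Set ℕ) : Set (Sym2 ℕ) := {e ∈ E | ∀ v ∈ e, v ∉ S}

/-- The graph with edge set `E` is `k`-connected: it has more than `k` vertices and
deleting any set of fewer than `k` vertices leaves a connected graph. -/
def KConnected (k : ℕ) (E : Set (Sym2 ℕ)) : Prop :=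
  k < (eSupp E).ncard ∧
  ∀ S : Finset ℕ, S.card < k →
    ((SimpleGraph.fromEdgeSet E).induce (eSupp E \ ↑S)).Connected

/-- `E` is a forest. -/
def IsForest (E : Set (Sym2 ℕ)) : Prop := (SimpleGraph.fromEdgeSet E).IsAcyclic

/-- `E` is a matching: no two distinct edges of `E` share a vertex. -/
def IsMatching (E : Set (Sym2 ℕ)) : Prop :=
  ∀ e ∈ E, ∀ f ∈ E, e ≠ f → ∀ v : ℕ, v ∈ e → v ∉ f

/-- `E` is a star `K_{1,m}` with `m` edges. -/
def IsStar (m : ℕ) (E : Set (Sym2 ℕ)) : Prop :=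
  ∃ (c : ℕ) (L : Finset ℕ), c ∉ L ∧ L.card = m ∧ E = (fun x => s(c, x)) '' ↑L

/-- `C` is a cycle graph `C_n` for some `n ≥ 3`. -/
def IsCycleGraph (C : Set (Sym2 ℕ)) : Prop :=
  ∃ n : ℕ, 3 ≤ n ∧ ∃ f : ZMod n → ℕ, Function.Injective f ∧
    C = {e : Sym2 ℕ | ∃ i : ZMod n, e = s(f i, f (i + 1))}

/-- The rank of the set `X` in the matroid `M₀`: the supremum of the cardinalities of
independent subsets of `X` (as a natural number; all sets we use are finite). -/
noncomputable def mrk (M₀ : Matroid (Sym2 ℕ)) (X : Set (Sym2 ℕ)) : ℕ :=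
  sSup {n : ℕ | ∃ I ⊆ X, M₀.Indep I ∧ I.ncard = n}

/-- A vertical `k`-separation of the matroid `M₀`. -/
def VerticalSep (M₀ : Matroid (Sym2 ℕ)) (k : ℕ) (E₁ E₂ : Set (Sym2 ℕ)) : Prop :=
  Disjoint E₁ E₂ ∧ E₁ ∪ E₂ = M₀.E ∧
  k ≤ mrk M₀ E₁ ∧ k ≤ mrk M₀ E₂ ∧
  mrk M₀ E₁ + mrk M₀ E₂ + 1 ≤ mrk M₀ M₀.E + k

/-- The matroid `M₀` is vertically `k`-connected. -/
def VerticallyConnected (M₀ : Matroid (Sym2 ℕ)) (k : ℕ) : Prop :=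
  k ≤ mrk M₀ M₀.E ∧
  ∀ k' : ℕ, 0 < k' → k' < k → ∀ E₁ E₂ : Set (Sym2 ℕ), ¬ VerticalSep M₀ k' E₁ E₂

/-- A `d`-dimensional abstract rigidity matroid on the complete graph with vertex set `V`. -/
def IsARM (d : ℕ) (V : Set ℕ) (M₀ : Matroid (Sym2 ℕ)) : Prop :=
  M₀.E = clique V ∧
  (∀ E₁ E₂ : Set (Sym2 ℕ), E₁ ⊆ clique V → E₂ ⊆ clique V →
      (eSupp E₁ ∩ eSupp E₂).ncard < d →
      M₀.closure (E₁ ∪ E₂) = M₀.closure E₁ ∪ M₀.closure E₂) ∧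
  (∀ E₁ E₂ : Set (Sym2 ℕ), E₁ ⊆ clique V → E₂ ⊆ clique V →
      d ≤ (eSupp E₁ ∩ eSupp E₂).ncard →
      M₀.closure E₁ = clique (eSupp E₁) → M₀.closure E₂ = clique (eSupp E₂) →
      M₀.closure (E₁ ∪ E₂) = clique (eSupp E₁ ∪ eSupp E₂))

/-- The `d`-dimensional edge split operation: replace an edge `uv` of `G` by a new
vertex `w` joined to `u` and `v`, as well as to `d - 1` other vertices of `G`. -/
def EdgeSplit (d : ℕ) (G G' : Set (Sym2 ℕ)) : Prop :=
  ∃ (u v w : ℕ) (X : Finset ℕ),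
    s(u, v) ∈ G ∧ w ∉ eSupp G ∧ ↑X ⊆ eSupp G ∧ X.card = d - 1 ∧ u ∉ X ∧ v ∉ X ∧
    G' = (G \ {s(u, v)}) ∪ {s(w, u), s(w, v)} ∪ ((fun x => s(w, x)) '' ↑X)

/-- A graph matroid family: a finitary matroid on the edge set of the countable
complete graph on `ℕ`, invariant under all permutations of `ℕ`. -/
structure GraphMatroidFamily where
  /-- The underlying matroid on the edge set of `K_ℕ`. -/
  M : Matroid (Sym2 ℕ)
  ground_eq : M.E = {e : Sym2 ℕ | ¬ e.IsDiag}
  finitary : M.Finitary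
  invariant : ∀ σ : Equiv.Perm ℕ, ∀ I : Set (Sym2 ℕ),
    M.Indep I → M.Indep (Sym2.map σ '' I)

namespace GraphMatroidFamily

variable (M : GraphMatroidFamily)

/-- The rank function of the family: `M.rk E` is the rank of the matroid `M(G)` for
any graph `G` whose edge set contains `E`. -/
noncomputable def rk (E : Set (Sym2 ℕ)) : ℕ := mrk M.M E

/-- A set of edges (a graph) is `M`-independent. -/
def Indep (E : Set (Sym2 ℕ)) : Prop := M.M.Indep E

/-- `C` is an `M`-circuit: a graph that is not `M`-independent, but such that deleting
any single edge from it yields an `M`-independent graph. -/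
def IsCircuit (C : Set (Sym2 ℕ)) : Prop :=
  IsGraph C ∧ ¬ M.Indep C ∧ ∀ e ∈ C, M.Indep (C \ {e})

/-- The graph with edge set `E` is `M`-rigid. -/
def Rigid (E : Set (Sym2 ℕ)) : Prop := M.rk E = M.rk (clique (eSupp E))

/-- The graph with vertex set `V` and edge set `E` is `M`-rigid. -/
def RigidOn (V : Set ℕ) (E : Set (Sym2 ℕ)) : Prop := M.rk E = M.rk (clique V)

/-- `M` is trivial if every (finite, simple) graph is `M`-independent. -/
def Trivial : Prop := ∀ E : Set (Sym2 ℕ), IsGraph E → M.Indep E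

/-- `M` is unbounded: the sequence `r(K_n)` is unbounded. -/
def Unbounded : Prop := ∀ B : ℕ, ∃ n : ℕ, B < M.rk (cliqueN n)

/-- `M` is bounded: the sequence `r(K_n)` is bounded. -/
def Bounded : Prop := ∃ B : ℕ, ∀ n : ℕ, M.rk (cliqueN n) ≤ B

/-- For a bounded family, `m` is the rank `r(M)` of `M`: the maximum (limit) of the
monotone sequence `r(K_n)`. -/
def HasRank (m : ℕ) : Prop :=
  (∀ n : ℕ, M.rk (cliqueN n) ≤ m) ∧ ∃ n : ℕ, M.rk (cliqueN n) = m

/-- `d` is the dimensionality of (the nontrivial family) `M`: the least `d` such that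
there is an `M`-circuit with minimum degree `d + 1`. -/
def IsDimensionality (d : ℕ) : Prop :=
  IsLeast {d : ℕ | ∃ C, M.IsCircuit C ∧ minDeg C = d + 1} d

/-- `t` is the threshold of (the nontrivial family) `M` with dimensionality `d`:
the least value of `|V(C)| - 1` over all `M`-circuits `C` with minimum degree `d + 1`. -/
def IsThreshold (d t : ℕ) : Prop :=
  IsLeast {t : ℕ | ∃ C, M.IsCircuit C ∧ minDeg C = d + 1 ∧ (eSupp C).ncard = t + 1} t

/-- `M` has the Lovász–Yemini property. -/
def LovaszYemini : Prop :=
  ∃ c : ℕ, ∀ E : Set (Sym2 ℕ), IsGraph E → KConnected c E → M.Rigid E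

/-- `ψ` is an isomorphism between the matroids `M(G)` and `M(H)`. -/
def MatroidIso (G H : Set (Sym2 ℕ)) (ψ : Sym2 ℕ → Sym2 ℕ) : Prop :=
  Set.BijOn ψ G H ∧ ∀ S ⊆ G, (M.Indep S ↔ M.Indep (ψ '' S))

/-- `G` is `M`-reconstructible: every isomorphism between `M(G)` and `M(H)` (for a graph
`H` without isolated vertices) is induced by a graph isomorphism. -/
def Reconstructible (G : Set (Sym2 ℕ)) : Prop :=
  ∀ H : Set (Sym2 ℕ), IsGraph H → ∀ ψ : Sym2 ℕ → Sym2 ℕ, M.MatroidIso G H ψ →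
    ∃ φ : ℕ → ℕ, Set.BijOn φ (eSupp G) (eSupp H) ∧ ∀ e ∈ G, ψ e = Sym2.map φ e

/-- `M` has the Whitney property. -/
def Whitney : Prop :=
  ∃ c : ℕ, ∀ E : Set (Sym2 ℕ), IsGraph E → KConnected c E → M.Reconstructible E

/-- `M` is the union of the graph matroid families `Ms`. -/
def IsUnionOf {k : ℕ} (Ms : Fin k → GraphMatroidFamily) : Prop :=
  ∀ I : Set (Sym2 ℕ),
    M.Indep I ↔ ∃ Is : Fin k → Set (Sym2 ℕ), (∀ i, (Ms i).Indep (Is i)) ∧ I = ⋃ i, Is i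

/-- `M` is a family of `d`-dimensional abstract rigidity matroids. -/
def FamilyOfARM (d : ℕ) : Prop :=
  ∀ n : ℕ, d ≤ n → IsARM d {v : ℕ | v < n} (M.M.restrict (cliqueN n))

/-- `M` is `1`-extendable: its dimensionality `d` is finite and positive, and the
`d`-dimensional edge split operation preserves `M`-independence. -/
def OneExtendable : Prop :=
  ∃ d : ℕ, 0 < d ∧ M.IsDimensionality d ∧
    ∀ G G' : Set (Sym2 ℕ), IsGraph G → M.Indep G → EdgeSplit d G G' → M.Indep G'

/-- `G` is `k`-vertex-redundantly `M`-rigid. -/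
def VertexRedundantlyRigid (k : ℕ) (G : Set (Sym2 ℕ)) : Prop :=
  M.Rigid G ∧ ∀ S : Finset ℕ, ↑S ⊆ eSupp G → S.card ≤ k →
    M.RigidOn (eSupp G \ ↑S) (deleteVerts G ↑S)

end GraphMatroidFamily

/-! ### Auxiliary rank API -/

open Set

namespace MrkAux

variable {M₀ : Matroid (Sym2 ℕ)} {X Y I J : Set (Sym2 ℕ)}

lemma mem_mrkSet (hI : M₀.Indep I) (hIX : I ⊆ X) :
    I.ncard ∈ {n : ℕ | ∃ I ⊆ X, M₀.Indep I ∧ I.ncard = n} := ⟨I, hIX, hI, rfl⟩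

lemma mrkSet_bddAbove (hX : X.Finite) :
    BddAbove {n : ℕ | ∃ I ⊆ X, M₀.Indep I ∧ I.ncard = n} := by
  refine ⟨X.ncard, fun n hn => ?_⟩
  obtain ⟨I, hIX, -, rfl⟩ := hn
  exact Set.ncard_le_ncard hIX hX

lemma basis'_ncard (hX : X.Finite) (hI : M₀.IsBasis' I X) : mrk M₀ X = I.ncard := by
  have hgreat : IsGreatest {n : ℕ | ∃ I ⊆ X, M₀.Indep I ∧ I.ncard = n} I.ncard := by
    constructor
    · exact mem_mrkSet hI.indep hI.subset
    · rintro n ⟨J, hJX, hJ, rfl⟩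
      obtain ⟨J', hJ', hJJ'⟩ := hJ.subset_isBasis'_of_subset hJX
      have hcard := hJ'.encard_eq_encard hI
      have hJ'fin : J'.Finite := hX.subset hJ'.subset
      calc J.ncard ≤ J'.ncard := Set.ncard_le_ncard hJJ' hJ'fin
        _ = I.ncard := by
            rw [Set.ncard_def, hcard, ← Set.ncard_def]
  exact hgreat.csSup_eq

lemma exists_basis'_mrk (hX : X.Finite) : ∃ I, M₀.IsBasis' I X ∧ I.ncard = mrk M₀ X := by
  obtain ⟨I, hI⟩ := M₀.exists_isBasis' X
  exact ⟨I, hI, (basis'_ncard hX hI).symm⟩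

lemma indep_ncard_le_mrk (hX : X.Finite) (hI : M₀.Indep I) (hIX : I ⊆ X) :
    I.ncard ≤ mrk M₀ X := by
  obtain ⟨J, hJ, hJcard⟩ := exists_basis'_mrk (M₀ := M₀) hX
  obtain ⟨J', hJ', hIJ'⟩ := hI.subset_isBasis'_of_subset hIX
  have := hJ'.encard_eq_encard hJ
  rw [← hJcard]
  calc I.ncard ≤ J'.ncard := Set.ncard_le_ncard hIJ' (hX.subset hJ'.subset)
    _ = J.ncard := by rw [Set.ncard_def, this, ← Set.ncard_def]

lemma indep_mrk_eq (hI : M₀.Indep I) (hIfin : I.Finite) : mrk M₀ I = I.ncard :=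
  basis'_ncard hIfin (hI.isBasis_self.isBasis')

lemma mrk_le_ncard (hX : X.Finite) : mrk M₀ X ≤ X.ncard := by
  obtain ⟨I, hI, hIcard⟩ := exists_basis'_mrk (M₀ := M₀) hX
  rw [← hIcard]
  exact Set.ncard_le_ncard hI.subset hX

lemma mrk_mono (hY : Y.Finite) (hXY : X ⊆ Y) : mrk M₀ X ≤ mrk M₀ Y := by
  obtain ⟨I, hI, hIcard⟩ := exists_basis'_mrk (M₀ := M₀) (hY.subset hXY)
  rw [← hIcard]
  exact indep_ncard_le_mrk hY hI.indep (hI.subset.trans hXY)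

lemma mrk_union_le (hX : X.Finite) (hY : Y.Finite) :
    mrk M₀ (X ∪ Y) ≤ mrk M₀ X + mrk M₀ Y := by
  obtain ⟨I, hI, hIcard⟩ := exists_basis'_mrk (M₀ := M₀) (hX.union hY)
  rw [← hIcard]
  have hsplit : I = (I ∩ X) ∪ (I \ X) := by
    simp [Set.inter_union_diff]
  have hIfin : I.Finite := (hX.union hY).subset hI.subset
  calc I.ncard ≤ (I ∩ X).ncard + (I \ X).ncard := by
        conv_lhs => rw [hsplit]
        exact Set.ncard_union_le _ _
    _ ≤ mrk M₀ X + mrk M₀ Y := by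
        gcongr
        · exact indep_ncard_le_mrk hX (hI.indep.inter_right X) inter_subset_right
        · refine indep_ncard_le_mrk hY (hI.indep.diff X) ?_
          rintro e ⟨heI, heX⟩
          rcases hI.subset heI with h | h
          · exact absurd h heX
          · exact h

lemma mrk_le_of_subset_closure (hY : Y.Finite) (hXcl : X ⊆ M₀.closure Y) (hX : X.Finite) :
    mrk M₀ X ≤ mrk M₀ Y := by
  obtain ⟨I, hI, hIcard⟩ := exists_basis'_mrk (M₀ := M₀) hX
  obtain ⟨J, hJ, hJcard⟩ := exists_basis'_mrk (M₀ := M₀) hY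
  rw [← hIcard, ← hJcard]
  have hJb : M₀.IsBasis J (M₀.closure Y) := hJ.isBasis_closure_right
  obtain ⟨I', hI', hII'⟩ := hI.indep.subset_isBasis_of_subset (hI.subset.trans hXcl)
    (M₀.closure_subset_ground Y)
  have hcard := hI'.encard_eq_encard hJb
  have hJfin : J.Finite := hY.subset hJ.subset
  have hI'fin : I'.Finite := by
    rw [← Set.encard_lt_top_iff, hcard, Set.encard_lt_top_iff]; exact hJfin
  calc I.ncard ≤ I'.ncard := Set.ncard_le_ncard hII' hI'fin
    _ = J.ncard := by rw [Set.ncard_def, hcard, ← Set.ncard_def]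

lemma mrk_restrict {G : Set (Sym2 ℕ)} (hXG : X ⊆ G) :
    mrk (M₀.restrict G) X = mrk M₀ X := by
  unfold mrk
  congr 1
  ext n
  constructor
  · rintro ⟨I, hIX, hI, rfl⟩
    exact ⟨I, hIX, (Matroid.restrict_indep_iff.1 hI).1, rfl⟩
  · rintro ⟨I, hIX, hI, rfl⟩
    exact ⟨I, hIX, Matroid.restrict_indep_iff.2 ⟨hI, hIX.trans hXG⟩, rfl⟩

lemma mrk_empty : mrk M₀ (∅ : Set (Sym2 ℕ)) = 0 := by
  simpa using indep_mrk_eq (M₀ := M₀) M₀.empty_indep finite_empty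

lemma mrk_pos_nonempty (h : 1 ≤ mrk M₀ X) : X.Nonempty := by
  by_contra hne
  rw [Set.not_nonempty_iff_eq_empty] at hne
  subst hne
  simp [mrk_empty] at h

end MrkAux

/-! ### Auxiliary graph API -/

namespace GraphAux

open Set

/-- The star of `v`: the edges of `F` containing `v`. -/
def star (F : Set (Sym2 ℕ)) (v : ℕ) : Set (Sym2 ℕ) := {e ∈ F | v ∈ e}

/-- The neighbours of `v` in `F`. -/
def nbrs (F : Set (Sym2 ℕ)) (v : ℕ) : Set ℕ := {y | s(v, y) ∈ F ∧ y ≠ v}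

lemma star_subset (F : Set (Sym2 ℕ)) (v : ℕ) : star F v ⊆ F := fun _ h => h.1

lemma star_eq_image (F : Set (Sym2 ℕ)) (v : ℕ) (hF : ∀ e ∈ F, ¬ e.IsDiag) :
    star F v = (fun y => s(v, y)) '' nbrs F v := by
  ext e
  constructor
  · rintro ⟨heF, hve⟩
    refine ⟨Sym2.Mem.other hve, ⟨?_, ?_⟩, ?_⟩
    · rw [Sym2.other_spec hve]; exact heF
    · intro h
      apply hF e heF
      have := Sym2.other_spec hve
      rw [h] at this
      rw [← this]
      exact Sym2.mk_isDiag_iff.2 rfl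
    · exact Sym2.other_spec hve
  · rintro ⟨y, ⟨hyF, -⟩, rfl⟩
    exact ⟨hyF, Sym2.mem_mk_left v y⟩

lemma deg_eq_ncard_nbrs (F : Set (Sym2 ℕ)) (v : ℕ) (hF : ∀ e ∈ F, ¬ e.IsDiag) :
    deg F v = (nbrs F v).ncard := by
  rw [deg, show {e ∈ F | v ∈ e} = star F v from rfl, star_eq_image F v hF]
  exact Set.ncard_image_of_injective _ (fun a b hab => by
    simpa using Sym2.congr_right.mp hab)

lemma nbrs_finite {F : Set (Sym2 ℕ)} (hF : F.Finite) (v : ℕ) : (nbrs F v).Finite := by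
  have : nbrs F v ⊆ (fun y => s(v,y)) ⁻¹' F := fun y hy => hy.1
  refine Set.Finite.subset (Set.Finite.preimage ?_ hF) this
  intro a ha b hb hab
  simpa using Sym2.congr_right.mp hab

lemma star_finite {F : Set (Sym2 ℕ)} (hF : F.Finite) (v : ℕ) : (star F v).Finite :=
  hF.subset (star_subset F v)

lemma mem_eSupp_iff {F : Set (Sym2 ℕ)} {v : ℕ} : v ∈ eSupp F ↔ (star F v).Nonempty := by
  constructor
  · rintro ⟨e, heF, hve⟩; exact ⟨e, heF, hve⟩
  · rintro ⟨e, heF, hve⟩; exact ⟨e, heF, hve⟩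

lemma eSupp_finite {F : Set (Sym2 ℕ)} (hF : F.Finite) : (eSupp F).Finite := by
  have : eSupp F ⊆ ⋃ e ∈ F, {x | x ∈ e} := by
    rintro v ⟨e, heF, hve⟩
    exact Set.mem_biUnion heF hve
  refine Set.Finite.subset (Set.Finite.biUnion hF fun e _ => ?_) this
  induction e with
  | _ a b =>
    have : {x | x ∈ s(a, b)} ⊆ {a, b} := by
      intro x hx
      rcases Sym2.mem_iff.1 hx with h | h <;> simp [h]
    exact ((Set.finite_singleton b).insert a).subset this

lemma deg_pos_of_mem_eSupp {F : Set (Sym2 ℕ)} (hF : F.Finite) {v : ℕ} (hv : v ∈ eSupp F) :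
    1 ≤ deg F v := by
  rw [mem_eSupp_iff] at hv
  have : 0 < (star F v).ncard := by
    rw [Set.ncard_pos (star_finite hF v)]; exact hv
  exact this

lemma mem_eSupp_of_deg_pos {F : Set (Sym2 ℕ)} {v : ℕ} (h : 1 ≤ deg F v) : v ∈ eSupp F := by
  rw [mem_eSupp_iff]
  by_contra hne
  rw [Set.not_nonempty_iff_eq_empty] at hne
  rw [deg, show {e ∈ F | v ∈ e} = star F v from rfl, hne] at h
  simp at h

lemma eSupp_mono {F F' : Set (Sym2 ℕ)} (h : F ⊆ F') : eSupp F ⊆ eSupp F' := by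
  rintro v ⟨e, heF, hve⟩; exact ⟨e, h heF, hve⟩

lemma eSupp_union (F F' : Set (Sym2 ℕ)) : eSupp (F ∪ F') = eSupp F ∪ eSupp F' := by
  ext v
  constructor
  · rintro ⟨e, he, hve⟩
    rcases he with h | h
    · exact Or.inl ⟨e, h, hve⟩
    · exact Or.inr ⟨e, h, hve⟩
  · rintro (⟨e, he, hve⟩ | ⟨e, he, hve⟩)
    · exact ⟨e, Or.inl he, hve⟩
    · exact ⟨e, Or.inr he, hve⟩

lemma deg_mono {F F' : Set (Sym2 ℕ)} (hF' : F'.Finite) (h : F ⊆ F') (v : ℕ) :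
    deg F v ≤ deg F' v := by
  apply Set.ncard_le_ncard _ (star_finite hF' v)
  rintro e ⟨heF, hve⟩; exact ⟨h heF, hve⟩

/-- Degree adds over a disjoint partition of the edge set. -/
lemma deg_union_of_disjoint {F F' : Set (Sym2 ℕ)} (hF : F.Finite) (hF' : F'.Finite)
    (hdisj : Disjoint F F') (v : ℕ) :
    deg (F ∪ F') v = deg F v + deg F' v := by
  have : star (F ∪ F') v = star F v ∪ star F' v := by
    ext e; constructor
    · rintro ⟨(h | h), hv⟩
      · exact Or.inl ⟨h, hv⟩
      · exact Or.inr ⟨h, hv⟩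
    · rintro (⟨h, hv⟩ | ⟨h, hv⟩)
      · exact ⟨Or.inl h, hv⟩
      · exact ⟨Or.inr h, hv⟩
  rw [deg, show {e ∈ F ∪ F' | v ∈ e} = star (F ∪ F') v from rfl, this]
  rw [Set.ncard_union_eq (hdisj.mono (star_subset F v) (star_subset F' v))
    (star_finite hF v) (star_finite hF' v)]
  rfl

end GraphAux

/-! ### Circuits and the key independence lemma -/

namespace CircAux

open Set GraphAux MrkAux

lemma eSupp_nonempty {F : Set (Sym2 ℕ)} (hF : F.Nonempty) : (eSupp F).Nonempty := by
  obtain ⟨e, heF⟩ := hF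
  induction e with
  | _ a b => exact ⟨a, ⟨s(a, b), heF, Sym2.mem_mk_left a b⟩⟩

lemma one_le_minDeg {F : Set (Sym2 ℕ)} (hFfin : F.Finite) (hF : F.Nonempty) :
    1 ≤ minDeg F := by
  have hne : {k : ℕ | ∃ v ∈ eSupp F, deg F v = k}.Nonempty := by
    obtain ⟨v, hv⟩ := eSupp_nonempty hF
    exact ⟨deg F v, v, hv, rfl⟩
  have := Nat.sInf_mem hne
  obtain ⟨v, hv, hdeg⟩ := this
  rw [minDeg, ← hdeg]
  exact deg_pos_of_mem_eSupp hFfin hv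

lemma minDeg_le_deg {F : Set (Sym2 ℕ)} {v : ℕ} (hv : v ∈ eSupp F) :
    minDeg F ≤ deg F v :=
  Nat.sInf_le ⟨v, hv, rfl⟩

lemma exists_minDeg {F : Set (Sym2 ℕ)} (hF : F.Nonempty) :
    ∃ v ∈ eSupp F, deg F v = minDeg F := by
  have hne : {k : ℕ | ∃ v ∈ eSupp F, deg F v = k}.Nonempty := by
    obtain ⟨v, hv⟩ := eSupp_nonempty hF
    exact ⟨deg F v, v, hv, rfl⟩
  have := Nat.sInf_mem hne
  obtain ⟨v, hv, hdeg⟩ := this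
  exact ⟨v, hv, hdeg⟩

variable {M : GraphMatroidFamily} {d : ℕ}

lemma circuit_nonempty {C : Set (Sym2 ℕ)} (hC : M.IsCircuit C) : C.Nonempty := by
  rcases Set.eq_empty_or_nonempty C with h | h
  · exact absurd (h ▸ M.M.empty_indep) hC.2.1
  · exact h

/-- Every `M`-circuit has minimum degree at least `d + 1`, where `d` is
the dimensionality. -/
lemma circuit_minDeg_ge (hd : M.IsDimensionality d) {C : Set (Sym2 ℕ)}
    (hC : M.IsCircuit C) : d + 1 ≤ minDeg C := by
  have h1 : 1 ≤ minDeg C := one_le_minDeg hC.1.1 (circuit_nonempty hC)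
  have : d ≤ minDeg C - 1 := hd.2 ⟨C, hC, by omega⟩
  omega

/-- Every finite dependent set contains a circuit. -/
lemma exists_circuit_subset (M : GraphMatroidFamily) :
    ∀ n (X : Set (Sym2 ℕ)), X.ncard ≤ n → X.Finite → X ⊆ M.M.E → ¬ M.M.Indep X →
      ∃ C, C ⊆ X ∧ M.IsCircuit C := by
  intro n
  induction n with
  | zero =>
    intro X hcard hfin hXE hdep
    rw [Nat.le_zero, Set.ncard_eq_zero hfin] at hcard
    exact absurd (hcard ▸ M.M.empty_indep) hdep
  | succ n IH =>
    intro X hcard hfin hXE hdep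
    by_cases hall : ∀ e ∈ X, M.M.Indep (X \ {e})
    · refine ⟨X, subset_rfl, ⟨⟨hfin, fun e he => ?_⟩, hdep, hall⟩⟩
      have := M.ground_eq ▸ hXE he
      exact this
    · push_neg at hall
      obtain ⟨e, heX, hdep'⟩ := hall
      have hlt : (X \ {e}).ncard ≤ n := by
        have h1 : (X \ {e}).ncard < X.ncard := by
          apply Set.ncard_lt_ncard _ hfin
          exact ⟨Set.diff_subset, fun hsub => (hsub heX).2 rfl⟩
        omega
      obtain ⟨C, hCX, hC⟩ := IH (X \ {e}) hlt (hfin.subset Set.diff_subset)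
        (Set.diff_subset.trans hXE) hdep'
      exact ⟨C, hCX.trans Set.diff_subset, hC⟩

/-- Key lemma: adjoining to an independent set a set `A` of edges, each touching `S`,
with all degrees in `S` at most `d`, preserves independence, provided
the independent set avoids `S`. -/
lemma indep_union (hd : M.IsDimensionality d) {X A : Set (Sym2 ℕ)} {S : Set ℕ}
    (hX : M.M.Indep X) (hA : A.Finite) (hAE : ∀ e ∈ A, ¬ e.IsDiag)
    (htouch : ∀ e ∈ A, ∃ v ∈ S, v ∈ e)
    (hdeg : ∀ v ∈ S, deg A v ≤ d)
    (hXS : ∀ v ∈ S, v ∉ eSupp X) :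
    M.M.Indep (X ∪ A) := by
  by_contra hdep
  have hAgr : A ⊆ M.M.E := by
    rw [M.ground_eq]; exact fun e he => hAE e he
  have hXA : X ∪ A ⊆ M.M.E := Set.union_subset hX.subset_ground hAgr
  -- get a finite dependent subset
  haveI := M.finitary
  have : ∃ D, D ⊆ X ∪ A ∧ D.Finite ∧ ¬ M.M.Indep D := by
    by_contra hno
    push_neg at hno
    exact hdep (Matroid.indep_of_forall_finite_subset_indep _ fun D hD hDfin =>
      hno D hD hDfin)
  obtain ⟨D, hDXA, hDfin, hDdep⟩ := this
  obtain ⟨C, hCD, hC⟩ := exists_circuit_subset M D.ncard D le_rfl hDfin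
    (hDXA.trans hXA) hDdep
  have hCXA : C ⊆ X ∪ A := hCD.trans hDXA
  -- C is not contained in X
  have : ∃ a ∈ C, a ∈ A ∧ a ∉ X := by
    by_contra hno
    push_neg at hno
    have hCX : C ⊆ X := by
      intro a haC
      rcases hCXA haC with h | h
      · exact h
      · by_contra haX
        exact haX (hno a haC h)
    exact hC.2.1 (hX.subset hCX)
  obtain ⟨a, haC, haA, -⟩ := this
  obtain ⟨v, hvS, hva⟩ := htouch a haA
  have hvC : v ∈ eSupp C := ⟨a, haC, hva⟩
  have hdegle : deg C v ≤ deg A v := by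
    apply Set.ncard_le_ncard _ (star_finite hA v)
    rintro e ⟨heC, hve⟩
    rcases hCXA heC with h | h
    · exact absurd ⟨e, h, hve⟩ (hXS v hvS)
    · exact ⟨h, hve⟩
  have h1 := minDeg_le_deg hvC
  have h2 := circuit_minDeg_ge hd hC
  have h3 := hdeg v hvS
  omega

end CircAux

/-! ### Vertex deletion and rank -/

namespace DelAux

open Set GraphAux MrkAux CircAux

lemma deleteVerts_single (F : Set (Sym2 ℕ)) (v : ℕ) :
    deleteVerts F {v} = {e ∈ F | v ∉ e} := by
  ext e
  simp only [deleteVerts, Set.mem_setOf_eq, Set.mem_singleton_iff]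
  constructor
  · rintro ⟨heF, h⟩
    exact ⟨heF, fun hv => h v hv rfl⟩
  · rintro ⟨heF, h⟩
    exact ⟨heF, fun u hu hueq => h (hueq ▸ hu)⟩

lemma deleteVerts_subset (F : Set (Sym2 ℕ)) (S : Set ℕ) : deleteVerts F S ⊆ F :=
  fun _ h => h.1

lemma union_star (F : Set (Sym2 ℕ)) (v : ℕ) :
    F = deleteVerts F {v} ∪ star F v := by
  rw [deleteVerts_single]
  ext e
  constructor
  · intro heF
    by_cases hv : v ∈ e
    · exact Or.inr ⟨heF, hv⟩
    · exact Or.inl ⟨heF, hv⟩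
  · rintro (⟨h, -⟩ | ⟨h, -⟩) <;> exact h

lemma not_mem_eSupp_deleteVerts {S : Set ℕ} {v : ℕ} (hv : v ∈ S) (F : Set (Sym2 ℕ)) :
    v ∉ eSupp (deleteVerts F S) := by
  rintro ⟨e, ⟨-, he⟩, hve⟩
  exact he v hve hv

lemma deleteVerts_union_distrib (F F' : Set (Sym2 ℕ)) (S : Set ℕ) :
    deleteVerts (F ∪ F') S = deleteVerts F S ∪ deleteVerts F' S := by
  ext e
  constructor
  · rintro ⟨(h | h), hS⟩
    · exact Or.inl ⟨h, hS⟩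
    · exact Or.inr ⟨h, hS⟩
  · rintro (⟨h, hS⟩ | ⟨h, hS⟩)
    · exact ⟨Or.inl h, hS⟩
    · exact ⟨Or.inr h, hS⟩

lemma deleteVerts_deleteVerts (F : Set (Sym2 ℕ)) (S T : Set ℕ) :
    deleteVerts (deleteVerts F S) T = deleteVerts F (S ∪ T) := by
  ext e
  constructor
  · rintro ⟨⟨heF, hS⟩, hT⟩
    refine ⟨heF, fun u hu hST => ?_⟩
    rcases hST with h | h
    · exact hS u hu h
    · exact hT u hu h
  · rintro ⟨heF, hST⟩
    exact ⟨⟨heF, fun u hu h => hST u hu (Or.inl h)⟩, fun u hu h => hST u hu (Or.inr h)⟩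

lemma deleteVerts_mono {F F' : Set (Sym2 ℕ)} (h : F ⊆ F') (S : Set ℕ) :
    deleteVerts F S ⊆ deleteVerts F' S := fun e he => ⟨h he.1, he.2⟩

lemma eSupp_deleteVerts_subset (F : Set (Sym2 ℕ)) (S : Set ℕ) :
    eSupp (deleteVerts F S) ⊆ eSupp F \ S := by
  rintro v ⟨e, ⟨heF, hS⟩, hve⟩
  exact ⟨⟨e, heF, hve⟩, fun hv => hS v hve hv⟩

lemma eq_of_two_mem {e : Sym2 ℕ} {u v : ℕ} (hne : u ≠ v) (hu : u ∈ e) (hv : v ∈ e) :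
    e = s(u, v) :=
  (Sym2.mem_and_mem_iff hne).1 ⟨hu, hv⟩

lemma deg_deleteVert_ge {F : Set (Sym2 ℕ)} (hFfin : F.Finite) {u : ℕ} (v : ℕ) (hne : u ≠ v) :
    deg F u ≤ deg (deleteVerts F {v}) u + 1 := by
  rw [deleteVerts_single]
  have hsub : star F u \ {s(u, v)} ⊆ star {e ∈ F | v ∉ e} u := by
    rintro e ⟨⟨heF, hue⟩, hne'⟩
    refine ⟨⟨heF, fun hv => ?_⟩, hue⟩
    exact hne' (eq_of_two_mem hne hue hv)
  have h1 : (star F u).ncard ≤ (star F u \ {s(u, v)}).ncard + 1 := by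
    by_cases h : s(u,v) ∈ star F u
    · rw [Set.ncard_diff_singleton_add_one h (star_finite hFfin u)]
    · rw [Set.diff_singleton_eq_self h]; omega
  calc deg F u = (star F u).ncard := rfl
    _ ≤ (star F u \ {s(u, v)}).ncard + 1 := h1
    _ ≤ deg {e ∈ F | v ∉ e} u + 1 := by
        have hfin2 : (star {e ∈ F | v ∉ e} u).Finite :=
          star_finite (hFfin.subset (fun e he => he.1)) u
        exact Nat.add_le_add_right (Set.ncard_le_ncard hsub hfin2) 1

variable {M : GraphMatroidFamily} {d : ℕ}

lemma mrk_deleteVert_le {F : Set (Sym2 ℕ)} (hFfin : F.Finite) (v : ℕ) :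
    mrk M.M F ≤ mrk M.M (deleteVerts F {v}) + deg F v := by
  conv_lhs => rw [union_star F v]
  calc mrk M.M (deleteVerts F {v} ∪ star F v)
      ≤ mrk M.M (deleteVerts F {v}) + mrk M.M (star F v) :=
        mrk_union_le (hFfin.subset (deleteVerts_subset F {v})) (star_finite hFfin v)
    _ ≤ mrk M.M (deleteVerts F {v}) + deg F v := by
        gcongr
        exact mrk_le_ncard (star_finite hFfin v)

lemma mrk_deleteVert_ge (hd : M.IsDimensionality d) {F : Set (Sym2 ℕ)} (hFfin : F.Finite)
    (hFgr : ∀ e ∈ F, ¬ e.IsDiag) (v : ℕ) :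
    mrk M.M (deleteVerts F {v}) + min (deg F v) d ≤ mrk M.M F := by
  obtain ⟨X, hX, hXcard⟩ := exists_basis'_mrk (M₀ := M.M)
    (hFfin.subset (deleteVerts_subset F {v}))
  set c := min (deg F v) d with hc
  have hcle : c ≤ (star F v).ncard := min_le_left _ _
  obtain ⟨A, hAsub, hAcard⟩ := Set.exists_subset_card_eq hcle
  have hAfin : A.Finite := (star_finite hFfin v).subset hAsub
  have hdegA : deg A v = c := by
    have : star A v = A := by
      ext e
      exact ⟨fun h => h.1, fun h => ⟨h, (hAsub h).2⟩⟩
    rw [deg, show {e ∈ A | v ∈ e} = star A v from rfl, this, hAcard]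
  have hXv : v ∉ eSupp X := fun h =>
    not_mem_eSupp_deleteVerts (S := ({v} : Set ℕ)) rfl F (eSupp_mono hX.subset h)
  have hind : M.M.Indep (X ∪ A) := by
    refine CircAux.indep_union (S := ({v} : Set ℕ)) hd hX.indep hAfin
      (fun e he => hFgr e (star_subset F v (hAsub he))) ?_ ?_ ?_
    · exact fun e he => ⟨v, rfl, (hAsub he).2⟩
    · rintro u rfl
      rw [hdegA]; exact min_le_right _ _
    · rintro u rfl; exact hXv
  have hXA : X ∪ A ⊆ F :=
    Set.union_subset (hX.subset.trans (deleteVerts_subset F {v}))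
      (hAsub.trans (star_subset F v))
  have hdisj : Disjoint X A := by
    rw [Set.disjoint_left]
    intro e heX heA
    exact hXv ⟨e, heX, (hAsub heA).2⟩
  calc mrk M.M (deleteVerts F {v}) + c = X.ncard + A.ncard := by rw [hXcard, hAcard]
    _ = (X ∪ A).ncard := (Set.ncard_union_eq hdisj
          (hFfin.subset (hX.subset.trans (deleteVerts_subset F {v}))) hAfin).symm
    _ ≤ mrk M.M F := indep_ncard_le_mrk hFfin hind hXA

/-- The rank of a graph is at least its minimum degree. -/
lemma mrk_ge_of_min_degree (hd : M.IsDimensionality d) (hd1 : 1 ≤ d) :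
    ∀ δ (F : Set (Sym2 ℕ)), F.Finite → (∀ e ∈ F, ¬ e.IsDiag) → F.Nonempty →
    (∀ u ∈ eSupp F, δ ≤ deg F u) → δ ≤ mrk M.M F := by
  intro δ
  induction δ with
  | zero => intro F _ _ _ _; exact Nat.zero_le _
  | succ δ IH =>
    intro F hFfin hFgr hFne hdeg
    obtain ⟨v, hv⟩ := eSupp_nonempty hFne
    by_cases hcase : δ + 1 ≤ d
    · have := mrk_deleteVert_ge hd hFfin hFgr v
      have h2 : δ + 1 ≤ min (deg F v) d := le_min (hdeg v hv) hcase
      omega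
    · -- δ + 1 > d, so δ ≥ d ≥ 1
      have hdd : d ≤ δ := by omega
      have hstep := mrk_deleteVert_ge hd hFfin hFgr v
      have hmind : min (deg F v) d = d := by
        have h5 := hdeg v hv
        exact min_eq_right (by omega)
      -- F - v is nonempty
      obtain ⟨e, heF, hve⟩ := mem_eSupp_iff.1 hv
      obtain ⟨y, hy⟩ : ∃ y, y ∈ nbrs F v := by
        have h := star_eq_image F v hFgr
        have : e ∈ (fun y => s(v, y)) '' nbrs F v := h ▸ ⟨heF, hve⟩
        obtain ⟨y, hy, -⟩ := this
        exact ⟨y, hy⟩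
      have hyF : y ∈ eSupp F := ⟨s(v, y), hy.1, Sym2.mem_mk_right v y⟩
      have hydeg : 2 ≤ deg F y := by
        have := hdeg y hyF; omega
      -- y has an edge avoiding v
      have hyv : ∃ e' ∈ F, y ∈ e' ∧ v ∉ e' := by
        by_contra hno
        push_neg at hno
        have hsub : star F y ⊆ {s(y, v)} := by
          rintro e' ⟨he'F, hye'⟩
          have hv' := hno e' he'F hye'
          exact eq_of_two_mem hy.2 hye' hv'
        have : deg F y ≤ 1 := by
          calc deg F y ≤ ({s(y,v)} : Set (Sym2 ℕ)).ncard :=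
                Set.ncard_le_ncard hsub (Set.finite_singleton _)
            _ = 1 := Set.ncard_singleton _
        omega
      obtain ⟨e', he'F, hye', hve'⟩ := hyv
      have hFvne : (deleteVerts F {v}).Nonempty := by
        refine ⟨e', ?_⟩
        rw [deleteVerts_single]
        exact ⟨he'F, hve'⟩
      have hIH : δ ≤ mrk M.M (deleteVerts F {v}) := by
        refine IH (deleteVerts F {v}) (hFfin.subset (deleteVerts_subset F {v}))
          (fun e he => hFgr e (deleteVerts_subset F {v} he)) hFvne ?_
        intro u hu
        have huF : u ∈ eSupp F := eSupp_mono (deleteVerts_subset F {v}) hu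
        have hune : u ≠ v := by
          rintro rfl
          exact not_mem_eSupp_deleteVerts (Set.mem_singleton _) F hu
        have := deg_deleteVert_ge hFfin v hune
        have := hdeg u huF
        omega
      omega

end DelAux

/-! ### Permutations and invariance -/

namespace PermAux

open Set

/-- Any injection on a finite subset of `ℕ` extends to a permutation of `ℕ`. -/
lemma exists_perm_extend {A : Set ℕ} (hA : A.Finite) {f : ℕ → ℕ} (hinj : Set.InjOn f A) :
    ∃ σ : Equiv.Perm ℕ, ∀ a ∈ A, σ a = f a := by
  classical
  set B := f '' A with hB
  have hBfin : B.Finite := hA.image f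
  have hAc : (Aᶜ : Set ℕ).Infinite := hA.infinite_compl
  have hBc : (Bᶜ : Set ℕ).Infinite := hBfin.infinite_compl
  haveI : Infinite (Aᶜ : Set ℕ) := hAc.to_subtype
  haveI : Infinite (Bᶜ : Set ℕ) := hBc.to_subtype
  haveI dA : Denumerable (Aᶜ : Set ℕ) := Nat.Subtype.denumerable _
  haveI dB : Denumerable (Bᶜ : Set ℕ) := Nat.Subtype.denumerable _
  let e₁ : A ≃ B := Equiv.Set.imageOfInjOn f A hinj
  let e₂ : (Aᶜ : Set ℕ) ≃ (Bᶜ : Set ℕ) := (Denumerable.eqv _).trans (Denumerable.eqv _).symm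
  let σ : Equiv.Perm ℕ :=
    (Equiv.Set.sumCompl A).symm.trans ((Equiv.sumCongr e₁ e₂).trans (Equiv.Set.sumCompl B))
  refine ⟨σ, fun a ha => ?_⟩
  show (Equiv.Set.sumCompl B) ((Equiv.sumCongr e₁ e₂) ((Equiv.Set.sumCompl A).symm a)) = f a
  rw [Equiv.Set.sumCompl_symm_apply_of_mem ha]
  rfl

variable {M : GraphMatroidFamily}

lemma indep_image_iff (σ : Equiv.Perm ℕ) {I : Set (Sym2 ℕ)} :
    M.M.Indep (Sym2.map σ '' I) ↔ M.M.Indep I := by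
  constructor
  · intro h
    have := M.invariant σ.symm _ h
    rwa [Set.image_image, show (fun e => Sym2.map σ.symm (Sym2.map σ e)) = id by
      funext e
      rw [Sym2.map_map]
      have : (σ.symm : ℕ → ℕ) ∘ (σ : ℕ → ℕ) = id := by
        funext x; simp
      rw [this, Sym2.map_id, id_eq], Set.image_id] at this
  · exact M.invariant σ I

lemma sym2_map_injective (σ : Equiv.Perm ℕ) : Function.Injective (Sym2.map (σ : ℕ → ℕ)) :=
  Sym2.map.injective σ.injective

lemma mrk_image_perm (σ : Equiv.Perm ℕ) (X : Set (Sym2 ℕ)) :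
    mrk M.M (Sym2.map σ '' X) = mrk M.M X := by
  unfold mrk
  congr 1
  ext n
  constructor
  · rintro ⟨I, hIX, hI, rfl⟩
    refine ⟨Sym2.map σ.symm '' I, ?_, ?_, ?_⟩
    · intro e he
      obtain ⟨e', he'I, rfl⟩ := he
      obtain ⟨e'', he''X, rfl⟩ := hIX he'I
      rw [Sym2.map_map]
      have : (σ.symm : ℕ → ℕ) ∘ (σ : ℕ → ℕ) = id := by funext x; simp
      rw [this, Sym2.map_id, id_eq]
      exact he''X
    · rw [indep_image_iff σ.symm]  -- need : map σ.symm '' I indep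
      exact hI
    · exact Set.ncard_image_of_injective _ (sym2_map_injective σ.symm)
  · rintro ⟨I, hIX, hI, rfl⟩
    refine ⟨Sym2.map σ '' I, Set.image_mono hIX, (indep_image_iff σ).2 hI,
      Set.ncard_image_of_injective _ (sym2_map_injective σ)⟩

lemma isDiag_map_iff (σ : Equiv.Perm ℕ) (e : Sym2 ℕ) :
    (Sym2.map σ e).IsDiag ↔ e.IsDiag := by
  induction e with
  | _ a b =>
    simp only [Sym2.map_pair_eq, Sym2.isDiag_iff_proj_eq]
    exact ⟨fun h => σ.injective h, fun h => by rw [h]⟩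

lemma eSupp_image (σ : Equiv.Perm ℕ) (F : Set (Sym2 ℕ)) :
    eSupp (Sym2.map σ '' F) = σ '' eSupp F := by
  ext v
  constructor
  · rintro ⟨e, ⟨e', he'F, rfl⟩, hve⟩
    rw [Sym2.mem_map] at hve
    obtain ⟨a, hae', rfl⟩ := hve
    exact ⟨a, ⟨e', he'F, hae'⟩, rfl⟩
  · rintro ⟨a, ⟨e, heF, hae⟩, rfl⟩
    exact ⟨Sym2.map σ e, ⟨e, heF, rfl⟩, Sym2.mem_map.2 ⟨a, hae, rfl⟩⟩

lemma star_image (σ : Equiv.Perm ℕ) (F : Set (Sym2 ℕ)) (v : ℕ) :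
    GraphAux.star (Sym2.map σ '' F) (σ v) = Sym2.map σ '' GraphAux.star F v := by
  ext e
  constructor
  · rintro ⟨⟨e', he'F, rfl⟩, hve⟩
    rw [Sym2.mem_map] at hve
    obtain ⟨a, hae', ha⟩ := hve
    have : a = v := σ.injective ha
    subst this
    exact ⟨e', ⟨he'F, hae'⟩, rfl⟩
  · rintro ⟨e', ⟨he'F, hve'⟩, rfl⟩
    exact ⟨⟨e', he'F, rfl⟩, Sym2.mem_map.2 ⟨v, hve', rfl⟩⟩

lemma deg_image (σ : Equiv.Perm ℕ) (F : Set (Sym2 ℕ)) (v : ℕ) :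
    deg (Sym2.map σ '' F) (σ v) = deg F v := by
  rw [deg, deg, show {e ∈ Sym2.map σ '' F | σ v ∈ e} = GraphAux.star (Sym2.map σ '' F) (σ v)
    from rfl, star_image]
  exact Set.ncard_image_of_injective _ (sym2_map_injective σ)

lemma minDeg_image (σ : Equiv.Perm ℕ) (F : Set (Sym2 ℕ)) :
    minDeg (Sym2.map σ '' F) = minDeg F := by
  rw [minDeg, minDeg]
  congr 1
  ext n
  constructor
  · rintro ⟨v, hv, hdeg⟩
    rw [eSupp_image] at hv
    obtain ⟨a, ha, rfl⟩ := hv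
    exact ⟨a, ha, by rw [← deg_image σ F a]; exact hdeg⟩
  · rintro ⟨v, hv, hdeg⟩
    exact ⟨σ v, by rw [eSupp_image]; exact ⟨v, hv, rfl⟩, by rw [deg_image]; exact hdeg⟩

lemma circuit_image (σ : Equiv.Perm ℕ) {C : Set (Sym2 ℕ)} (hC : M.IsCircuit C) :
    M.IsCircuit (Sym2.map σ '' C) := by
  obtain ⟨⟨hCfin, hCgr⟩, hCdep, hCdel⟩ := hC
  refine ⟨⟨hCfin.image _, ?_⟩, ?_, ?_⟩
  · rintro e ⟨e', he'C, rfl⟩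
    rw [isDiag_map_iff]
    exact hCgr e' he'C
  · intro h
    exact hCdep ((indep_image_iff σ).1 h)
  · rintro e ⟨e', he'C, rfl⟩
    have : Sym2.map σ '' C \ {Sym2.map σ e'} = Sym2.map σ '' (C \ {e'}) := by
      rw [← Set.image_singleton, ← Set.image_diff (sym2_map_injective σ)]
    rw [this]
    exact (indep_image_iff σ).2 (hCdel e' he'C)

end PermAux

/-! ### Cliques and rank increments -/

namespace CliqueAux

open Set GraphAux MrkAux CircAux DelAux PermAux

lemma clique_mono {V V' : Set ℕ} (h : V ⊆ V') : clique V ⊆ clique V' :=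
  fun _ he => ⟨he.1, fun v hv => h (he.2 v hv)⟩

lemma clique_nondiag (V : Set ℕ) : ∀ e ∈ clique V, ¬ e.IsDiag := fun _ he => he.1

lemma clique_finite {V : Set ℕ} (hV : V.Finite) : (clique V).Finite := by
  have hsub : clique V ⊆ (Function.uncurry Sym2.mk) '' (V ×ˢ V) := by
    intro e he
    induction e with
    | _ a b =>
      refine ⟨(a, b), ⟨?_, ?_⟩, rfl⟩
      · exact he.2 a (Sym2.mem_mk_left a b)
      · exact he.2 b (Sym2.mem_mk_right a b)
  exact ((hV.prod hV).image _).subset hsub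

lemma eSupp_clique_subset (V : Set ℕ) : eSupp (clique V) ⊆ V := by
  rintro v ⟨e, he, hve⟩
  exact he.2 v hve

lemma subset_clique_eSupp {F : Set (Sym2 ℕ)} (hF : ∀ e ∈ F, ¬ e.IsDiag) :
    F ⊆ clique (eSupp F) :=
  fun e he => ⟨hF e he, fun v hv => ⟨e, he, hv⟩⟩

lemma pair_mem_clique {V : Set ℕ} {u v : ℕ} (hne : u ≠ v) (hu : u ∈ V) (hv : v ∈ V) :
    s(u, v) ∈ clique V := by
  refine ⟨by simpa using hne, fun w hw => ?_⟩
  rcases Sym2.mem_iff.1 hw with h | h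
  · exact h ▸ hu
  · exact h ▸ hv

variable {M : GraphMatroidFamily} {d t : ℕ}

/-- Lower bound on clique rank increment: adding a vertex gains at least `min |V| d`. -/
lemma mrk_clique_insert_ge (hd : M.IsDimensionality d) {V : Set ℕ} (hV : V.Finite)
    {v : ℕ} (hvV : v ∉ V) :
    mrk M.M (clique V) + min V.ncard d ≤ mrk M.M (clique (insert v V)) := by
  obtain ⟨X, hX, hXcard⟩ := exists_basis'_mrk (M₀ := M.M) (clique_finite hV)
  set c := min V.ncard d with hc
  obtain ⟨Y, hYsub, hYcard⟩ := Set.exists_subset_card_eq (min_le_left V.ncard d)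
  have hYfin : Y.Finite := hV.subset hYsub
  set A : Set (Sym2 ℕ) := (fun y => s(v, y)) '' Y with hA
  have hinj : Function.Injective (fun y : ℕ => s(v, y)) := fun a b hab => by
    simpa using Sym2.congr_right.mp hab
  have hAcard : A.ncard = c := by rw [hA, Set.ncard_image_of_injective _ hinj, hYcard]
  have hAfin : A.Finite := hYfin.image _
  have hXsupp : ∀ u ∈ eSupp X, u ∈ V := fun u hu =>
    eSupp_clique_subset V (eSupp_mono hX.subset hu)
  have hvX : v ∉ eSupp X := fun h => hvV (hXsupp v h)
  have hne : ∀ y ∈ Y, y ≠ v := fun y hy h => hvV (h ▸ hYsub hy)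
  have hind : M.M.Indep (X ∪ A) := by
    refine CircAux.indep_union (S := ({v} : Set ℕ)) hd hX.indep hAfin ?_ ?_ ?_ ?_
    · rintro e ⟨y, hy, rfl⟩
      simpa using fun h => (hne y hy) h.symm
    · rintro e ⟨y, hy, rfl⟩
      exact ⟨v, rfl, Sym2.mem_mk_left v y⟩
    · rintro u rfl
      have : star A u = A := by
        ext e
        refine ⟨fun h => h.1, fun h => ⟨h, ?_⟩⟩
        obtain ⟨y, -, rfl⟩ := h
        exact Sym2.mem_mk_left u y
      rw [deg, show {e ∈ A | u ∈ e} = star A u from rfl, this, hAcard]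
      exact min_le_right _ _
    · rintro u rfl
      exact hvX
  have hsub : X ∪ A ⊆ clique (insert v V) := by
    refine Set.union_subset (hX.subset.trans (clique_mono (Set.subset_insert v V))) ?_
    rintro e ⟨y, hy, rfl⟩
    refine pair_mem_clique (fun h => (hne y hy) h.symm) (Set.mem_insert v V)
      (Set.mem_insert_of_mem v (hYsub hy))
  have hdisj : Disjoint X A := by
    rw [Set.disjoint_left]
    rintro e heX ⟨y, hy, rfl⟩
    exact hvX ⟨s(v, y), heX, Sym2.mem_mk_left v y⟩
  calc mrk M.M (clique V) + c = X.ncard + A.ncard := by rw [hXcard, hAcard]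
    _ = (X ∪ A).ncard := (Set.ncard_union_eq hdisj ((clique_finite hV).subset hX.subset)
          hAfin).symm
    _ ≤ mrk M.M (clique (insert v V)) :=
        indep_ncard_le_mrk (clique_finite (hV.insert v)) hind hsub

end CliqueAux

namespace CliqueAux

open Set GraphAux MrkAux CircAux DelAux PermAux

variable {M : GraphMatroidFamily} {d t : ℕ}

lemma nbrs_subset_eSupp (F : Set (Sym2 ℕ)) (u : ℕ) : nbrs F u ⊆ eSupp F :=
  fun y hy => ⟨s(u, y), hy.1, Sym2.mem_mk_right u y⟩

lemma not_mem_nbrs_self (F : Set (Sym2 ℕ)) (u : ℕ) : u ∉ nbrs F u := fun h => h.2 rfl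

/-- Upper bound on clique rank increment (needs at least `t` vertices). -/
lemma mrk_clique_insert_le (hd : M.IsDimensionality d) (ht : M.IsThreshold d t)
    {V : Set ℕ} (hV : V.Finite) (htV : t ≤ V.ncard) {v : ℕ} (hvV : v ∉ V) :
    mrk M.M (clique (insert v V)) ≤ mrk M.M (clique V) + d := by
  classical
  obtain ⟨C₀, hC₀, hC₀deg, hC₀card⟩ := ht.1
  have hC₀fin : C₀.Finite := hC₀.1.1
  have hC₀gr : ∀ e ∈ C₀, ¬ e.IsDiag := hC₀.1.2
  have hsuppfin : (eSupp C₀).Finite := eSupp_finite hC₀fin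
  obtain ⟨u, hu, hudeg⟩ := exists_minDeg (circuit_nonempty hC₀)
  rw [hC₀deg] at hudeg
  set N := nbrs C₀ u with hN
  have hNfin : N.Finite := nbrs_finite hC₀fin u
  have hNcard : N.ncard = d + 1 := by
    rw [hN, ← deg_eq_ncard_nbrs C₀ u hC₀gr, hudeg]
  have hNsupp : N ⊆ eSupp C₀ := nbrs_subset_eSupp C₀ u
  have huN : u ∉ N := not_mem_nbrs_self C₀ u
  obtain ⟨w₀, hw₀⟩ : N.Nonempty := by
    rw [← Set.ncard_pos hNfin, hNcard]; omega
  set N' := N \ {w₀} with hN'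
  have hN'fin : N'.Finite := hNfin.sdiff
  have hN'card : N'.ncard = d := by
    rw [hN', Set.ncard_diff_singleton_of_mem hw₀, hNcard]
    omega
  set R := eSupp C₀ \ insert u N with hR
  have hRfin : R.Finite := hsuppfin.sdiff
  have huNsupp : insert u N ⊆ eSupp C₀ := Set.insert_subset hu hNsupp
  have hRcard : R.ncard = (t + 1) - (d + 2) := by
    rw [hR, Set.ncard_diff huNsupp (hsuppfin.subset huNsupp), hC₀card,
      Set.ncard_insert_of_notMem huN hNfin, hNcard]
  -- choose the auxiliary star target `Y`
  have htd : d + 1 ≤ t := by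
    have h1 : (insert u N).ncard ≤ (eSupp C₀).ncard := Set.ncard_le_ncard huNsupp hsuppfin
    rw [Set.ncard_insert_of_notMem huN hNfin, hNcard, hC₀card] at h1
    omega
  obtain ⟨Y, hYsub, hYcard⟩ := Set.exists_subset_card_eq (show d ≤ V.ncard by omega)
  have hYfin : Y.Finite := hV.subset hYsub
  set A₀ : Set (Sym2 ℕ) := (fun z => s(v, z)) '' Y with hA₀
  have hstarinj : Function.Injective (fun z : ℕ => s(v, z)) := fun a b hab => by
    simpa using Sym2.congr_right.mp hab
  have hA₀card : A₀.ncard = d := by rw [hA₀, Set.ncard_image_of_injective _ hstarinj, hYcard]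
  have hA₀fin : A₀.Finite := hYfin.image _
  have hA₀gr : ∀ e ∈ A₀, ¬ e.IsDiag := by
    rintro e ⟨z, hz, rfl⟩
    have hzv : z ≠ v := fun h => hvV (h ▸ hYsub hz)
    simpa using fun h => hzv h.symm
  have hbasegr : ∀ e ∈ clique V ∪ A₀, ¬ e.IsDiag := by
    rintro e (he | he)
    · exact he.1
    · exact hA₀gr e he
  have hbaseE : clique V ∪ A₀ ⊆ M.M.E := by
    rw [M.ground_eq]; exact fun e he => hbasegr e he
  have hbasefin : (clique V ∪ A₀).Finite := (clique_finite hV).union hA₀fin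
  -- main claim
  have hmain : ∀ y ∈ V, y ∉ Y → s(v, y) ∈ M.M.closure (clique V ∪ A₀) := by
    intro y hyV hyY
    -- build the injection φ from the support of C₀ into `insert v V`
    have hbij : ∃ f₁ : ℕ → ℕ, Set.BijOn f₁ N' Y := by
      refine Set.Finite.exists_bijOn_of_encard_eq hN'fin ?_
      rw [← hN'fin.cast_ncard_eq, ← hYfin.cast_ncard_eq, hN'card, hYcard]
    obtain ⟨f₁, hf₁⟩ := hbij
    have hinsfin : (insert y Y).Finite := hYfin.insert y
    have hinssub : insert y Y ⊆ V := Set.insert_subset hyV hYsub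
    have hinscard : (insert y Y).ncard = d + 1 := by
      rw [Set.ncard_insert_of_notMem hyY hYfin, hYcard]
    have hinj2 : ∃ f₂ : ℕ → ℕ, R ⊆ f₂ ⁻¹' (V \ insert y Y) ∧ Set.InjOn f₂ R := by
      refine Set.Finite.exists_injOn_of_encard_le hRfin ?_
      have hfin3 : (V \ insert y Y).Finite := hV.sdiff
      rw [← hRfin.cast_ncard_eq, ← hfin3.cast_ncard_eq]
      have hcard3 : (V \ insert y Y).ncard = V.ncard - (d + 1) := by
        rw [Set.ncard_diff hinssub hinsfin, hinscard]
      rw [hRcard, hcard3]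
      exact_mod_cast (by omega : (t + 1) - (d + 2) ≤ V.ncard - (d + 1))
    obtain ⟨f₂, hf₂sub, hf₂inj⟩ := hinj2
    set φ : ℕ → ℕ := fun x => if x = u then v else if x = w₀ then y
      else if x ∈ N' then f₁ x else f₂ x with hφ
    have hφu : φ u = v := by simp [hφ]
    have hw₀u : w₀ ≠ u := fun h => huN (h ▸ hw₀)
    have hφw₀ : φ w₀ = y := by simp [hφ, hw₀u]
    have hφN' : ∀ x ∈ N', φ x = f₁ x := by
      intro x hx
      have hxu : x ≠ u := fun h => huN (h ▸ hx.1)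
      have hxw₀ : x ≠ w₀ := fun h => hx.2 (h ▸ rfl)
      simp [hφ, hxu, hxw₀, hx]
    have hφR : ∀ x ∈ R, φ x = f₂ x := by
      intro x hx
      have hxu : x ≠ u := fun h => hx.2 (h ▸ Set.mem_insert u N)
      have hxw₀ : x ≠ w₀ := fun h => hx.2 (h ▸ Set.mem_insert_of_mem u hw₀)
      have hxN' : x ∉ N' := fun h => hx.2 (Set.mem_insert_of_mem u h.1)
      simp [hφ, hxu, hxw₀, hxN']
    -- classify
    have hclass : ∀ x ∈ eSupp C₀, (x = u ∧ φ x = v) ∨ (x = w₀ ∧ φ x = y) ∨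
        (x ∈ N' ∧ φ x ∈ Y) ∨ (x ∈ R ∧ φ x ∈ V \ insert y Y) := by
      intro x hx
      by_cases hxu : x = u
      · exact Or.inl ⟨hxu, hxu ▸ hφu⟩
      by_cases hxw₀ : x = w₀
      · exact Or.inr (Or.inl ⟨hxw₀, hxw₀ ▸ hφw₀⟩)
      by_cases hxN' : x ∈ N'
      · exact Or.inr (Or.inr (Or.inl ⟨hxN', (hφN' x hxN') ▸ hf₁.mapsTo hxN'⟩))
      · have hxR : x ∈ R := by
          refine ⟨hx, fun h => ?_⟩
          rcases Set.mem_insert_iff.1 h with h | h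
          · exact hxu h
          · rcases Classical.em (x = w₀) with h' | h'
            · exact hxw₀ h'
            · exact hxN' ⟨h, h'⟩
        exact Or.inr (Or.inr (Or.inr ⟨hxR, by rw [hφR x hxR]; exact hf₂sub hxR⟩))
    have hvy : v ≠ y := fun h => hvV (h ▸ hyV)
    have hφinj : Set.InjOn φ (eSupp C₀) := by
      intro a ha b hb hab
      rcases hclass a ha with ⟨ha1, ha2⟩ | ⟨ha1, ha2⟩ | ⟨ha1, ha2⟩ | ⟨ha1, ha2⟩ <;>
        rcases hclass b hb with ⟨hb1, hb2⟩ | ⟨hb1, hb2⟩ | ⟨hb1, hb2⟩ | ⟨hb1, hb2⟩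
      · rw [ha1, hb1]
      · exact absurd (ha2.symm.trans (hab.trans hb2)) hvy
      · exact absurd (show v ∈ Y by rw [← ha2, hab]; exact hb2) (fun h => hvV (hYsub h))
      · exact absurd (show v ∈ V \ insert y Y by rw [← ha2, hab]; exact hb2)
          (fun h => hvV h.1)
      · exact absurd (hb2.symm.trans (hab.symm.trans ha2)) hvy
      · rw [ha1, hb1]
      · exact absurd (show y ∈ Y by rw [← ha2, hab]; exact hb2) hyY
      · have heq : φ b = y := hab.symm.trans ha2
        rw [heq] at hb2
        exact absurd hb2 (fun h => h.2 (Set.mem_insert y Y))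
      · exact absurd (show v ∈ Y by rw [← hb2, ← hab]; exact ha2) (fun h => hvV (hYsub h))
      · exact absurd (show y ∈ Y by rw [← hb2, ← hab]; exact ha2) hyY
      · exact hf₁.injOn ha1 hb1 (by rw [← hφN' a ha1, ← hφN' b hb1, hab])
      · exact absurd (show φ a ∈ V \ insert y Y by rw [hab]; exact hb2)
          (fun h => h.2 (Set.mem_insert_of_mem y ha2))
      · exact absurd (show v ∈ V \ insert y Y by rw [← hb2, ← hab]; exact ha2)
          (fun h => hvV h.1)
      · have heq : φ a = y := hab.trans hb2
        rw [heq] at ha2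
        exact absurd ha2 (fun h => h.2 (Set.mem_insert y Y))
      · exact absurd (show φ b ∈ V \ insert y Y by rw [← hab]; exact ha2)
          (fun h => h.2 (Set.mem_insert_of_mem y hb2))
      · exact hf₂inj ha1 hb1 (by rw [← hφR a ha1, ← hφR b hb1, hab])
    obtain ⟨σ, hσ⟩ := exists_perm_extend hsuppfin hφinj
    set C := Sym2.map σ '' C₀ with hC
    have hCcirc : M.IsCircuit C := circuit_image σ hC₀
    have hw₀supp : w₀ ∈ eSupp C₀ := hNsupp hw₀
    have huw₀ : s(u, w₀) ∈ C₀ := hw₀.1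
    have himg : Sym2.map σ s(u, w₀) = s(v, y) := by
      rw [Sym2.map_pair_eq, hσ u hu, hσ w₀ hw₀supp, hφu, hφw₀]
    have hvyC : s(v, y) ∈ C := ⟨s(u, w₀), huw₀, himg⟩
    -- C minus the edge s(v,y) is inside the base set
    have hCsub : C \ {s(v, y)} ⊆ clique V ∪ A₀ := by
      rintro e ⟨⟨e₀, he₀C, rfl⟩, hne⟩
      by_cases hue₀ : u ∈ e₀
      · -- edge at u
        have hbmem := Sym2.other_spec hue₀
        set b := Sym2.Mem.other hue₀ with hb
        have hbN : b ∈ N := by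
          refine ⟨by rw [hbmem]; exact he₀C, fun hbu => ?_⟩
          apply hC₀gr e₀ he₀C
          rw [← hbmem, hbu]
          exact Sym2.mk_isDiag_iff.2 rfl
        have hbsupp : b ∈ eSupp C₀ := hNsupp hbN
        by_cases hbw₀ : b = w₀
        · exfalso
          refine hne (Set.mem_singleton_iff.2 ?_)
          rw [← hbmem, hbw₀]
          exact himg
        · right
          have hbN' : b ∈ N' := ⟨hbN, hbw₀⟩
          refine ⟨f₁ b, hf₁.mapsTo hbN', ?_⟩
          rw [← hbmem, Sym2.map_pair_eq, hσ u hu, hσ b hbsupp, hφu, hφN' b hbN']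
      · -- edge avoiding u
        left
        refine ⟨?_, ?_⟩
        · rw [isDiag_map_iff]
          exact hC₀gr e₀ he₀C
        · intro w hw
          rw [Sym2.mem_map] at hw
          obtain ⟨a, hae₀, rfl⟩ := hw
          have hasupp : a ∈ eSupp C₀ := ⟨e₀, he₀C, hae₀⟩
          have hau : a ≠ u := fun h => hue₀ (h ▸ hae₀)
          rw [hσ a hasupp]
          rcases hclass a hasupp with ⟨h1, -⟩ | ⟨-, h2⟩ | ⟨-, h2⟩ | ⟨-, h2⟩
          · exact absurd h1 hau
          · exact h2 ▸ hyV
          · exact hYsub h2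
          · exact h2.1
    -- the circuit property puts s(v,y) in the closure
    have hindep : M.M.Indep (C \ {s(v, y)}) := hCcirc.2.2 _ hvyC
    have hnotmem : s(v, y) ∉ C \ {s(v, y)} := fun h => h.2 rfl
    have hdep : M.M.Dep (insert (s(v, y)) (C \ {s(v, y)})) := by
      rw [Set.insert_diff_singleton, Set.insert_eq_self.2 hvyC]
      refine ⟨hCcirc.2.1, ?_⟩
      rw [M.ground_eq]
      exact fun e he => hCcirc.1.2 e he
    have hcl : s(v, y) ∈ M.M.closure (C \ {s(v, y)}) :=
      (hindep.mem_closure_iff_of_notMem hnotmem).2 hdep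
    exact M.M.closure_subset_closure hCsub hcl
  -- every edge of the bigger clique lies in the closure
  have hclsub : clique (insert v V) ⊆ M.M.closure (clique V ∪ A₀) := by
    intro e he
    by_cases hve : v ∈ e
    · have hspec := Sym2.other_spec hve
      set b := Sym2.Mem.other hve with hb
      have hbV : b ∈ V := by
        have hbmem : b ∈ insert v V := he.2 b (by rw [← hspec]; exact Sym2.mem_mk_right v b)
        rcases Set.mem_insert_iff.1 hbmem with h | h
        · exfalso
          apply he.1
          rw [← hspec, h]
          exact Sym2.mk_isDiag_iff.2 rfl
        · exact h
      by_cases hbY : b ∈ Y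
      · rw [← hspec]
        exact M.M.subset_closure _ hbaseE (Or.inr ⟨b, hbY, rfl⟩)
      · rw [← hspec]
        exact hmain b hbV hbY
    · refine M.M.subset_closure _ hbaseE (Or.inl ⟨he.1, fun w hw => ?_⟩)
      rcases Set.mem_insert_iff.1 (he.2 w hw) with h | h
      · exact absurd (h ▸ hw) hve
      · exact h
  calc mrk M.M (clique (insert v V))
      ≤ mrk M.M (clique V ∪ A₀) :=
        mrk_le_of_subset_closure hbasefin hclsub (clique_finite (hV.insert v))
    _ ≤ mrk M.M (clique V) + mrk M.M A₀ := mrk_union_le (clique_finite hV) hA₀fin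
    _ ≤ mrk M.M (clique V) + d := by
        have h1 := mrk_le_ncard (M₀ := M.M) hA₀fin
        omega

end CliqueAux

namespace CliqueAux

open Set GraphAux MrkAux CircAux DelAux PermAux

variable {M : GraphMatroidFamily} {d t : ℕ}

lemma setLt_eq (n : ℕ) : {v : ℕ | v < n} = ↑(Finset.range n) := by
  ext v; simp

lemma setLt_finite (n : ℕ) : {v : ℕ | v < n}.Finite := by
  rw [setLt_eq]; exact (Finset.range n).finite_toSet

lemma setLt_card (n : ℕ) : {v : ℕ | v < n}.ncard = n := by
  rw [setLt_eq, Set.ncard_coe_finset, Finset.card_range]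

lemma setLt_succ (n : ℕ) : {v : ℕ | v < n + 1} = insert n {v : ℕ | v < n} := by
  ext v
  simp only [Set.mem_setOf_eq, Set.mem_insert_iff]
  omega

/-- The threshold is at least `d + 1`. -/
lemma threshold_ge (ht : M.IsThreshold d t) : d + 1 ≤ t := by
  obtain ⟨C₀, hC₀, hC₀deg, hC₀card⟩ := ht.1
  have hC₀fin : C₀.Finite := hC₀.1.1
  have hC₀gr : ∀ e ∈ C₀, ¬ e.IsDiag := hC₀.1.2
  have hsuppfin : (eSupp C₀).Finite := eSupp_finite hC₀fin
  obtain ⟨u, hu, hudeg⟩ := exists_minDeg (circuit_nonempty hC₀)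
  rw [hC₀deg] at hudeg
  have hNcard : (nbrs C₀ u).ncard = d + 1 := by
    rw [← deg_eq_ncard_nbrs C₀ u hC₀gr, hudeg]
  have h1 : (insert u (nbrs C₀ u)).ncard ≤ (eSupp C₀).ncard :=
    Set.ncard_le_ncard (Set.insert_subset hu (nbrs_subset_eSupp C₀ u)) hsuppfin
  rw [Set.ncard_insert_of_notMem (not_mem_nbrs_self C₀ u) (nbrs_finite hC₀fin u),
    hNcard, hC₀card] at h1
  omega

/-- For an unbounded family, the dimensionality is positive. -/
lemma dim_pos (hu : M.Unbounded) (hd : M.IsDimensionality d) (ht : M.IsThreshold d t) :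
    1 ≤ d := by
  by_contra hd0
  push_neg at hd0
  interval_cases d
  -- now d = 0; the rank of cliques stabilises
  have hchain : ∀ m, t ≤ m → mrk M.M (cliqueN m) ≤ mrk M.M (cliqueN t) := by
    intro m hm
    induction m with
    | zero =>
      exact mrk_mono (clique_finite (setLt_finite t))
        (clique_mono (fun v hv => by simp at hv))
    | succ m IH =>
      rcases Nat.lt_or_ge m t with h | h
      · have : t = m + 1 := by omega
        rw [this]
      · have hstep : mrk M.M (cliqueN (m + 1)) ≤ mrk M.M (cliqueN m) + 0 := by
          have := mrk_clique_insert_le (M := M) hd ht (setLt_finite m)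
            (by rw [setLt_card]; exact h) (v := m) (by simp)
          rwa [← setLt_succ] at this
        have := IH h
        omega
  obtain ⟨n, hn⟩ := hu (mrk M.M (cliqueN t))
  rcases Nat.lt_or_ge n t with h | h
  · have h2 : mrk M.M (cliqueN n) ≤ mrk M.M (cliqueN t) := by
      apply mrk_mono (clique_finite (setLt_finite t))
      apply clique_mono
      intro v hv
      exact lt_of_lt_of_le hv (le_of_lt h)
    have hn' : mrk M.M (cliqueN t) < mrk M.M (cliqueN n) := hn
    omega
  · have h2 := hchain n h
    have hn' : mrk M.M (cliqueN t) < mrk M.M (cliqueN n) := hn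
    omega

lemma min_eq_d_of_ge {n : ℕ} (ht : M.IsThreshold d t) (h : t ≤ n) : min n d = d :=
  min_eq_right (by have := threshold_ge ht; omega)

/-- Exact clique increment above the threshold. -/
lemma mrk_clique_insert_eq (hd : M.IsDimensionality d) (ht : M.IsThreshold d t)
    {V : Set ℕ} (hV : V.Finite) (htV : t ≤ V.ncard) {v : ℕ} (hvV : v ∉ V) :
    mrk M.M (clique (insert v V)) = mrk M.M (clique V) + d := by
  refine le_antisymm (mrk_clique_insert_le hd ht hV htV hvV) ?_
  have := mrk_clique_insert_ge hd hV hvV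
  rwa [min_eq_d_of_ge ht htV] at this

/-- Exact clique decrement above the threshold. -/
lemma mrk_clique_remove_eq (hd : M.IsDimensionality d) (ht : M.IsThreshold d t)
    {V : Set ℕ} (hV : V.Finite) {v : ℕ} (hvV : v ∈ V) (htV : t ≤ V.ncard - 1) :
    mrk M.M (clique V) = mrk M.M (clique (V \ {v})) + d := by
  have hins : insert v (V \ {v}) = V := Set.insert_diff_singleton.trans
    (Set.insert_eq_self.2 hvV)
  have hcard : (V \ {v}).ncard = V.ncard - 1 := Set.ncard_diff_singleton_of_mem hvV
  have := mrk_clique_insert_eq hd ht (hV.sdiff (t := {v})) (by omega) (v := v)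
    (fun h => h.2 rfl)
  rwa [hins] at this

/-- The clique rank is at least `|V| - 1`. -/
lemma mrk_clique_ge_card (hd : M.IsDimensionality d) (hd1 : 1 ≤ d) :
    ∀ n (V : Set ℕ), V.Finite → V.ncard = n → n ≤ mrk M.M (clique V) + 1 := by
  intro n
  induction n with
  | zero => intro V _ _; omega
  | succ n IH =>
    intro V hV hcard
    obtain ⟨v, hv⟩ : V.Nonempty := by rw [← Set.ncard_pos hV, hcard]; omega
    have hcard' : (V \ {v}).ncard = n := by
      rw [Set.ncard_diff_singleton_of_mem hv, hcard]
      omega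
    have hstep := mrk_clique_insert_ge hd (hV.sdiff (t := {v})) (v := v) (fun h => h.2 rfl)
    rw [Set.insert_diff_singleton.trans (Set.insert_eq_self.2 hv), hcard'] at hstep
    have hIH := IH (V \ {v}) (hV.sdiff (t := {v})) hcard'
    rcases Nat.eq_zero_or_pos n with h | h
    · omega
    · have : 1 ≤ min n d := by omega
      omega

lemma quad_aux (n m : ℕ) : 2 * m * n ≤ n * (n - 1) + m * (m + 1) := by
  rcases n with _ | p
  · simp
  · simp only [Nat.add_sub_cancel]
    rcases le_or_gt m p with h | h
    · obtain ⟨q, rfl⟩ := Nat.exists_eq_add_of_le h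
      nlinarith
    · obtain ⟨q, rfl⟩ := Nat.exists_eq_add_of_le h
      nlinarith

/-- Quadratic lower bound for small cliques: `n (n-1) ≤ 2 rk` when `n ≤ d + 1`. -/
lemma mrk_clique_quad_small (hd : M.IsDimensionality d) :
    ∀ n (V : Set ℕ), V.Finite → V.ncard = n → n ≤ d + 1 →
      n * (n - 1) ≤ 2 * mrk M.M (clique V) := by
  intro n
  induction n with
  | zero => intro V _ _ _; simp
  | succ n IH =>
    intro V hV hcard hn
    obtain ⟨v, hv⟩ : V.Nonempty := by rw [← Set.ncard_pos hV, hcard]; omega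
    have hcard' : (V \ {v}).ncard = n := by
      rw [Set.ncard_diff_singleton_of_mem hv, hcard]
      omega
    have hstep := mrk_clique_insert_ge hd (hV.sdiff (t := {v})) (v := v) (fun h => h.2 rfl)
    rw [Set.insert_diff_singleton.trans (Set.insert_eq_self.2 hv), hcard'] at hstep
    have hmin : min n d = n := min_eq_left (by omega)
    rw [hmin] at hstep
    have hIH := IH (V \ {v}) (hV.sdiff (t := {v})) hcard' (by omega)
    have hkey : (n + 1) * (n + 1 - 1) = n * (n - 1) + 2 * n := by
      rcases n with _ | p
      · simp
      · simp only [Nat.add_sub_cancel]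
        ring
    omega

/-- Linear-quadratic lower bound: `2 d n ≤ 2 rk + d (d+1)`. -/
lemma mrk_clique_quad (hd : M.IsDimensionality d) :
    ∀ n (V : Set ℕ), V.Finite → V.ncard = n →
      2 * d * n ≤ 2 * mrk M.M (clique V) + d * (d + 1) := by
  intro n
  induction n with
  | zero => intro V _ _; simp
  | succ n IH =>
    intro V hV hcard
    rcases Nat.lt_or_ge n d with hsmall | hbig
    · -- n + 1 ≤ d + 1 : use the quadratic bound
      have := mrk_clique_quad_small hd (n + 1) V hV hcard (by omega)
      have := quad_aux (n + 1) d
      omega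
    · obtain ⟨v, hv⟩ : V.Nonempty := by rw [← Set.ncard_pos hV, hcard]; omega
      have hcard' : (V \ {v}).ncard = n := by
        rw [Set.ncard_diff_singleton_of_mem hv, hcard]
        omega
      have hstep := mrk_clique_insert_ge hd (hV.sdiff (t := {v})) (v := v) (fun h => h.2 rfl)
      rw [Set.insert_diff_singleton.trans (Set.insert_eq_self.2 hv), hcard',
        min_eq_right hbig] at hstep
      have hIH := IH (V \ {v}) (hV.sdiff (t := {v})) hcard'
      have : 2 * d * (n + 1) = 2 * d * n + 2 * d := by ring
      omega

end CliqueAux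

namespace MainAux

open Set GraphAux MrkAux CircAux DelAux PermAux CliqueAux

variable {M : GraphMatroidFamily} {d t k : ℕ} {G : Set (Sym2 ℕ)}

/-- Access the redundant-rigidity hypothesis with a finite set of vertices. -/
lemma rigidOn_of_red (hred : M.VertexRedundantlyRigid k G) {S : Set ℕ} (hSfin : S.Finite)
    (hSV : S ⊆ eSupp G) (hScard : S.ncard ≤ k) :
    mrk M.M (deleteVerts G S) = mrk M.M (clique (eSupp G \ S)) := by
  have h := hred.2 hSfin.toFinset (by rwa [hSfin.coe_toFinset])
    (by rwa [← Set.ncard_eq_toFinset_card S hSfin])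
  rw [hSfin.coe_toFinset] at h
  exact h

lemma rigid_eq (hred : M.VertexRedundantlyRigid k G) :
    mrk M.M G = mrk M.M (clique (eSupp G)) := hred.1

section Main

variable (hu : M.Unbounded) (hd : M.IsDimensionality d) (ht : M.IsThreshold d t)
  (hG : IsGraph G) (hred : M.VertexRedundantlyRigid k G)
  (hcard : k + t ≤ (eSupp G).ncard)

/-- Minimum degree of a `k`-vertex-redundantly rigid graph is at least `d + k`. -/
lemma deg_ge (hu : M.Unbounded) (hd : M.IsDimensionality d) (ht : M.IsThreshold d t)
    (hG : IsGraph G) (hred : M.VertexRedundantlyRigid k G)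
    (hcard : k + t ≤ (eSupp G).ncard) {v : ℕ} (hv : v ∈ eSupp G) :
    d + k ≤ deg G v := by
  classical
  have hd1 : 1 ≤ d := dim_pos hu hd ht
  have hGfin : G.Finite := hG.1
  have hGgr := hG.2
  have hVfin : (eSupp G).Finite := eSupp_finite hGfin
  set V := eSupp G with hV
  set δ := deg G v with hδ
  set j := min k δ with hj
  have hδn : δ = (nbrs G v).ncard := deg_eq_ncard_nbrs G v hGgr
  obtain ⟨S, hSnb, hScard⟩ := Set.exists_subset_card_eq
    (show j ≤ (nbrs G v).ncard by rw [← hδn]; exact min_le_right _ _)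
  have hSfin : S.Finite := (nbrs_finite hGfin v).subset hSnb
  have hSV : S ⊆ V := hSnb.trans (nbrs_subset_eSupp G v)
  have hvS : v ∉ S := fun h => not_mem_nbrs_self G v (hSnb h)
  have hrig := rigidOn_of_red hred hSfin hSV (by rw [hScard]; exact min_le_left _ _)
  have hvVS : v ∈ V \ S := ⟨hv, hvS⟩
  have hVSfin : (V \ S).Finite := hVfin.sdiff
  have hVScard : (V \ S).ncard = V.ncard - j := by
    rw [Set.ncard_diff hSV hSfin, hScard]
  -- lower bound for the clique on V \ S
  have hsize : d ≤ ((V \ S) \ {v}).ncard := by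
    have h1 : ((V \ S) \ {v}).ncard = (V \ S).ncard - 1 :=
      Set.ncard_diff_singleton_of_mem hvVS
    have h3 := threshold_ge (M := M) ht
    have hjk : j ≤ k := min_le_left _ _
    omega
  have hlow : mrk M.M (clique ((V \ S) \ {v})) + d ≤ mrk M.M (clique (V \ S)) := by
    have := mrk_clique_insert_ge hd (hVSfin.sdiff (t := {v})) (v := v) (fun h => h.2 rfl)
    rw [Set.insert_diff_singleton.trans (Set.insert_eq_self.2 hvVS),
      min_eq_right hsize] at this
    exact this
  -- upper bound for the rank of G - S
  have hdelfin : (deleteVerts G S).Finite := hGfin.subset (deleteVerts_subset G S)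
  have hup1 : mrk M.M (deleteVerts G S) ≤
      mrk M.M (deleteVerts (deleteVerts G S) {v}) + deg (deleteVerts G S) v :=
    mrk_deleteVert_le hdelfin v
  have hup2 : mrk M.M (deleteVerts (deleteVerts G S) {v}) ≤
      mrk M.M (clique ((V \ S) \ {v})) := by
    apply mrk_mono (clique_finite (hVSfin.sdiff (t := {v})))
    refine (subset_clique_eSupp ?_).trans (clique_mono ?_)
    · exact fun e he => hGgr e (deleteVerts_subset _ _ (deleteVerts_subset _ _ he))
    · rw [deleteVerts_deleteVerts]
      refine (eSupp_deleteVerts_subset G (S ∪ {v})).trans ?_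
      intro x hx
      exact ⟨⟨hx.1, fun h => hx.2 (Or.inl h)⟩, fun h => hx.2 (Or.inr h)⟩
  have hdegup : deg (deleteVerts G S) v ≤ δ - j := by
    have himgsub : (fun y => s(v, y)) '' S ⊆ star G v := by
      rintro e ⟨y, hy, rfl⟩
      exact ⟨(hSnb hy).1, Sym2.mem_mk_left v y⟩
    have hinj : Function.Injective (fun y : ℕ => s(v, y)) := fun a b hab => by
      simpa using Sym2.congr_right.mp hab
    have hsub : star (deleteVerts G S) v ⊆ star G v \ ((fun y => s(v, y)) '' S) := by
      rintro e ⟨⟨heG, heS⟩, hve⟩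
      refine ⟨⟨heG, hve⟩, ?_⟩
      rintro ⟨y, hyS, rfl⟩
      exact heS y (Sym2.mem_mk_right v y) hyS
    calc deg (deleteVerts G S) v
        ≤ (star G v \ ((fun y => s(v, y)) '' S)).ncard :=
          Set.ncard_le_ncard hsub ((star_finite hGfin v).sdiff)
      _ = δ - j := by
          rw [Set.ncard_diff himgsub (hSfin.image _),
            Set.ncard_image_of_injective _ hinj, hScard]
          rfl
  rcases le_or_gt k δ with hk | hk
  · have hjeq : j = k := min_eq_left hk
    -- from the chain of inequalities, d ≤ δ - j
    have hchain : mrk M.M (clique ((V \ S) \ {v})) + d ≤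
        mrk M.M (clique ((V \ S) \ {v})) + (δ - j) := by
      calc mrk M.M (clique ((V \ S) \ {v})) + d ≤ mrk M.M (clique (V \ S)) := hlow
        _ = mrk M.M (deleteVerts G S) := hrig.symm
        _ ≤ _ := le_trans hup1 (by omega)
    omega
  · exfalso
    have hjeq : j = δ := min_eq_right (le_of_lt hk)
    have hchain : mrk M.M (clique ((V \ S) \ {v})) + d ≤
        mrk M.M (clique ((V \ S) \ {v})) + (δ - j) := by
      calc mrk M.M (clique ((V \ S) \ {v})) + d ≤ mrk M.M (clique (V \ S)) := hlow
        _ = mrk M.M (deleteVerts G S) := hrig.symm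
        _ ≤ _ := le_trans hup1 (by omega)
    omega

end Main

end MainAux

namespace MainAux

open Set GraphAux MrkAux CircAux DelAux PermAux CliqueAux

variable {M : GraphMatroidFamily} {d t k : ℕ} {G : Set (Sym2 ℕ)}

/-- After deleting one vertex from a graph of min degree ≥ 2, the support is `V \ {v}`. -/
lemma eSupp_deleteVert (hG : IsGraph G) (hdeg : ∀ u ∈ eSupp G, 2 ≤ deg G u) (v : ℕ) :
    eSupp (deleteVerts G {v}) = eSupp G \ {v} := by
  apply Set.Subset.antisymm (eSupp_deleteVerts_subset G {v})
  rintro u ⟨huV, huv⟩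
  have huv' : u ≠ v := huv
  have h2 : 2 ≤ (star G u).ncard := hdeg u huV
  have hstar : ¬ star G u ⊆ {s(u, v)} := by
    intro hsub
    have := Set.ncard_le_ncard hsub (Set.finite_singleton _)
    rw [Set.ncard_singleton] at this
    omega
  obtain ⟨e, heS, hne⟩ := Set.not_subset.1 hstar
  have hve : v ∉ e := fun hv => hne (eq_of_two_mem huv' heS.2 hv)
  refine ⟨e, ?_, heS.2⟩
  rw [deleteVerts_single]
  exact ⟨heS.1, hve⟩

lemma isGraph_deleteVerts (hG : IsGraph G) (S : Set ℕ) : IsGraph (deleteVerts G S) :=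
  ⟨hG.1.subset (deleteVerts_subset G S), fun e he => hG.2 e (deleteVerts_subset G S he)⟩

/-- Connectivity transfer: deleting a vertex reduces `k`-connectivity by at most one. -/
lemma kconn_deleteVert (hG : IsGraph G) (hconn : KConnected k G)
    (hdeg : ∀ u ∈ eSupp G, 2 ≤ deg G u) {v : ℕ} (hv : v ∈ eSupp G) (hk : 1 ≤ k) :
    KConnected (k - 1) (deleteVerts G {v}) := by
  classical
  have hsupp := eSupp_deleteVert hG hdeg v
  have hVfin : (eSupp G).Finite := eSupp_finite hG.1
  constructor
  · rw [hsupp, Set.ncard_diff_singleton_of_mem hv]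
    have := hconn.1
    omega
  · intro S hS
    have hcard' : (insert v S).card < k := by
      have := Finset.card_insert_le v S
      omega
    have h := hconn.2 (insert v S) hcard'
    have hsets : eSupp (deleteVerts G {v}) \ ↑S = eSupp G \ ↑(insert v S) := by
      rw [hsupp]
      ext x
      simp only [Set.mem_diff, Set.mem_singleton_iff, Finset.coe_insert,
        Set.mem_insert_iff, Finset.mem_coe]
      tauto
    rw [hsets]
    have hgeq : (SimpleGraph.fromEdgeSet (deleteVerts G {v})).induce
        (eSupp G \ ↑(insert v S)) =
        (SimpleGraph.fromEdgeSet G).induce (eSupp G \ ↑(insert v S)) := by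
      ext a b
      simp only [SimpleGraph.comap_adj, Function.Embedding.coe_subtype,
        SimpleGraph.fromEdgeSet_adj]
      constructor
      · rintro ⟨he, hne⟩
        exact ⟨deleteVerts_subset G {v} he, hne⟩
      · rintro ⟨he, hne⟩
        refine ⟨⟨he, ?_⟩, hne⟩
        intro u hu hu'
        rcases Set.mem_singleton_iff.1 hu' with rfl
        have hav : (a : ℕ) ≠ u := by
          have := a.2
          intro h
          rw [h] at this
          exact this.2 (Finset.mem_coe.2 (Finset.mem_insert_self u S))
        have hbv : (b : ℕ) ≠ u := by
          have := b.2
          intro h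
          rw [h] at this
          exact this.2 (Finset.mem_coe.2 (Finset.mem_insert_self u S))
        rcases Sym2.mem_iff.1 hu with h | h
        · exact hav h.symm
        · exact hbv h.symm
    rw [hgeq]
    exact h

/-- Redundant rigidity transfer to `G - v`. -/
lemma red_deleteVert (hG : IsGraph G) (hred : M.VertexRedundantlyRigid k G)
    (hdeg : ∀ u ∈ eSupp G, 2 ≤ deg G u) {v : ℕ} (hv : v ∈ eSupp G) (hk : 1 ≤ k) :
    M.VertexRedundantlyRigid (k - 1) (deleteVerts G {v}) := by
  have hsupp := eSupp_deleteVert hG hdeg v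
  constructor
  · show mrk M.M (deleteVerts G {v}) = mrk M.M (clique (eSupp (deleteVerts G {v})))
    rw [hsupp]
    exact rigidOn_of_red hred (Set.finite_singleton v) (by simpa using hv)
      (by rw [Set.ncard_singleton]; omega)
  · intro S hSsub hScard
    show mrk M.M (deleteVerts (deleteVerts G {v}) ↑S) =
      mrk M.M (clique (eSupp (deleteVerts G {v}) \ ↑S))
    rw [deleteVerts_deleteVerts, hsupp]
    have h1 : ({v} : Set ℕ) ∪ ↑S = ↑(insert v S) := by
      simp [Finset.coe_insert]
    have h2 : (eSupp G \ {v}) \ ↑S = eSupp G \ ↑(insert v S) := by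
      ext x
      simp only [Set.mem_diff, Set.mem_singleton_iff, Finset.coe_insert,
        Set.mem_insert_iff, Finset.mem_coe]
      tauto
    rw [h1, h2]
    have hsub' : ↑(insert v S) ⊆ eSupp G := by
      rw [Finset.coe_insert]
      refine Set.insert_subset hv ?_
      refine hSsub.trans ?_
      rw [hsupp]
      exact Set.diff_subset
    have hcard' : (insert v S).card ≤ k := by
      have := Finset.card_insert_le v S
      omega
    exact hred.2 (insert v S) hsub' hcard'

/-- A walk in a graph crossing a predicate boundary yields a crossing edge. -/
lemma walk_cross {α : Type} {H : SimpleGraph α} (P : α → Prop) :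
    ∀ {a b : α}, H.Walk a b → P a → ¬ P b → ∃ x y, H.Adj x y ∧ P x ∧ ¬ P y := by
  intro a b w
  induction w with
  | nil => intro h h'; exact absurd h h'
  | @cons x y z hxy p IH =>
    intro hx hz
    by_cases hy : P y
    · exact IH hy hz
    · exact ⟨x, y, hxy, hx, hy⟩

/-- In a `k`-connected graph (`k ≥ 1`) split into two edge sets, the supports intersect. -/
lemma supports_intersect (hG : IsGraph G) (hconn : KConnected k G) (hk : 1 ≤ k)
    {E₁ E₂ : Set (Sym2 ℕ)} (hunion : E₁ ∪ E₂ = G)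
    (hne₁ : E₁.Nonempty) (hne₂ : E₂.Nonempty) :
    (eSupp E₁ ∩ eSupp E₂).Nonempty := by
  classical
  by_contra hempty
  rw [Set.not_nonempty_iff_eq_empty] at hempty
  have hVsplit : eSupp G = eSupp E₁ ∪ eSupp E₂ := by
    rw [← hunion, eSupp_union]
  have hconn0 := hconn.2 ∅ (by simp; omega)
  have hset : eSupp G \ ↑(∅ : Finset ℕ) = eSupp G := by simp
  rw [hset] at hconn0
  obtain ⟨x, hx⟩ := eSupp_nonempty hne₁
  obtain ⟨y, hy⟩ := eSupp_nonempty hne₂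
  have hxG : x ∈ eSupp G := hVsplit ▸ Or.inl hx
  have hyG : y ∈ eSupp G := hVsplit ▸ Or.inr hy
  have hyE₁ : y ∉ eSupp E₁ := by
    intro h
    exact absurd (hempty ▸ ⟨h, hy⟩ : y ∈ (∅ : Set ℕ)) (Set.notMem_empty y)
  obtain ⟨w⟩ := hconn0.preconnected ⟨x, hxG⟩ ⟨y, hyG⟩
  obtain ⟨a, b, hab, haP, hbP⟩ := walk_cross (P := fun z : (eSupp G : Set ℕ) => (z : ℕ) ∈ eSupp E₁) w hx hyE₁
  simp only [SimpleGraph.comap_adj, Function.Embedding.coe_subtype,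
    SimpleGraph.fromEdgeSet_adj] at hab
  have habG : s((a : ℕ), (b : ℕ)) ∈ E₁ ∪ E₂ := hunion.symm ▸ hab.1
  rcases habG with h | h
  · exact hbP ⟨_, h, Sym2.mem_mk_right _ _⟩
  · have haE₂ : (a : ℕ) ∈ eSupp E₂ := ⟨_, h, Sym2.mem_mk_left _ _⟩
    exact absurd (hempty ▸ ⟨haP, haE₂⟩ : (a : ℕ) ∈ (∅ : Set ℕ)) (Set.notMem_empty _)

end MainAux

namespace MainAux

open Set GraphAux MrkAux CircAux DelAux PermAux CliqueAux

lemma numeric_final (d K : ℕ) (hd : 1 ≤ d) (hK : 1 ≤ K) :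
    2 * K + 4 * d < 2 * d * K + d * d + d + 6 := by
  obtain ⟨e, rfl⟩ := Nat.exists_eq_add_of_le hd
  obtain ⟨f, rfl⟩ := Nat.exists_eq_add_of_le hK
  nlinarith

/-- The master induction: in a `k`-connected, `k`-vertex-redundantly rigid graph on at
least `k + t` vertices, every partition `(E₁, E₂)` of the edge set satisfies
`r(E₁) + r(E₂) ≥ r(G) + min(r(E₁), r(E₂), k)`. -/
theorem main_P (M : GraphMatroidFamily) (d t : ℕ)
    (hu : M.Unbounded) (hd : M.IsDimensionality d) (ht : M.IsThreshold d t) :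
    ∀ k (G : Set (Sym2 ℕ)), IsGraph G → KConnected k G → M.VertexRedundantlyRigid k G →
      k + t ≤ (eSupp G).ncard →
      ∀ E₁ E₂ : Set (Sym2 ℕ), Disjoint E₁ E₂ → E₁ ∪ E₂ = G →
      mrk M.M G + min (min (mrk M.M E₁) (mrk M.M E₂)) k ≤ mrk M.M E₁ + mrk M.M E₂ := by
  have hd1 : 1 ≤ d := dim_pos hu hd ht
  have htd : d + 1 ≤ t := threshold_ge ht
  intro k
  induction k with
  | zero =>
    intro G hG hconn hred hcard E₁ E₂ hdisj hunion
    have hGfin : G.Finite := hG.1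
    have h := mrk_union_le (M₀ := M.M) (hGfin.subset (hunion ▸ Set.subset_union_left))
      (hGfin.subset (hunion ▸ Set.subset_union_right))
    rw [hunion] at h
    simpa using h
  | succ k IH =>
    intro G hG hconn hred hcard E₁ E₂ hdisj hunion
    by_contra hlt
    push_neg at hlt
    set r₁ := mrk M.M E₁ with hr₁def
    set r₂ := mrk M.M E₂ with hr₂def
    set rG := mrk M.M G with hrGdef
    -- weaker instance at level k
    have hconnk : KConnected k G := ⟨by have := hconn.1; omega,
      fun S hS => hconn.2 S (by omega)⟩
    have hredk : M.VertexRedundantlyRigid k G :=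
      ⟨hred.1, fun S hS hcard' => hred.2 S hS (by omega)⟩
    have hIHG := IH G hG hconnk hredk (by omega) E₁ E₂ hdisj hunion
    -- narrow down
    have hr₁ : k + 1 ≤ r₁ := by omega
    have hr₂ : k + 1 ≤ r₂ := by omega
    have heq : r₁ + r₂ = rG + k := by omega
    clear hIHG hlt hconnk hredk
    -- notation
    have hGfin : G.Finite := hG.1
    have hGgr := hG.2
    set V := eSupp G with hVdef
    have hVfin : (V : Set ℕ).Finite := eSupp_finite hGfin
    set n := (V : Set ℕ).ncard with hndef
    have hn : k + 1 + t ≤ n := hcard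
    have hE₁fin : E₁.Finite := hGfin.subset (hunion ▸ Set.subset_union_left)
    have hE₂fin : E₂.Finite := hGfin.subset (hunion ▸ Set.subset_union_right)
    have hE₁gr : ∀ e ∈ E₁, ¬ e.IsDiag := fun e he => hGgr e (hunion ▸ Or.inl he)
    have hE₂gr : ∀ e ∈ E₂, ¬ e.IsDiag := fun e he => hGgr e (hunion ▸ Or.inr he)
    have hE₁ne : E₁.Nonempty := mrk_pos_nonempty (M₀ := M.M) (by omega)
    have hE₂ne : E₂.Nonempty := mrk_pos_nonempty (M₀ := M.M) (by omega)
    set V₁ := eSupp E₁ with hV₁def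
    set V₂ := eSupp E₂ with hV₂def
    have hV₁sub : V₁ ⊆ V := eSupp_mono (hunion ▸ Set.subset_union_left)
    have hV₂sub : V₂ ⊆ V := eSupp_mono (hunion ▸ Set.subset_union_right)
    obtain ⟨w, hwW⟩ : (V₁ ∩ V₂).Nonempty :=
      supports_intersect hG hconn (by omega) hunion hE₁ne hE₂ne
    have hrGV : rG = mrk M.M (clique V) := hred.1
    have hdegG : ∀ v ∈ V, d + (k + 1) ≤ deg G v := fun v hv =>
      deg_ge hu hd ht hG hred hcard hv
    have hdeg2 : ∀ v ∈ V, 2 ≤ deg G v := fun v hv => by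
      have := hdegG v hv; omega
    have hdegsplit : ∀ v, deg G v = deg E₁ v + deg E₂ v := fun v => by
      rw [← hunion]
      exact deg_union_of_disjoint hE₁fin hE₂fin hdisj v
    -- the deletion engine
    have engine : ∀ v ∈ V₁ ∩ V₂,
        d + 1 ≤ min (deg E₁ v) d + min (deg E₂ v) d →
        k + 1 + d ≤ r₁ + min (deg E₂ v) d →
        k + 1 + d ≤ r₂ + min (deg E₁ v) d → False := by
      intro v hvW hA hB hC
      have hvV : v ∈ V := hV₁sub hvW.1
      set c₁ := min (deg E₁ v) d with hc₁
      set c₂ := min (deg E₂ v) d with hc₂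
      have hlam1 : mrk M.M (deleteVerts E₁ {v}) + c₁ ≤ r₁ :=
        mrk_deleteVert_ge hd hE₁fin hE₁gr v
      have hlam2 : mrk M.M (deleteVerts E₂ {v}) + c₂ ≤ r₂ :=
        mrk_deleteVert_ge hd hE₂fin hE₂gr v
      -- rank of G - v
      have hsupp' := eSupp_deleteVert hG hdeg2 v
      have hGv : mrk M.M (deleteVerts G {v}) + d = rG := by
        have h1 : mrk M.M (deleteVerts G {v}) = mrk M.M (clique (V \ {v})) :=
          rigidOn_of_red hred (Set.finite_singleton v) (by simpa using hvV)
            (by rw [Set.ncard_singleton]; omega)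
        have h2 : mrk M.M (clique V) = mrk M.M (clique (V \ {v})) + d :=
          mrk_clique_remove_eq hd ht hVfin hvV (by omega)
        omega
      -- apply the induction hypothesis to G - v
      have hIH := IH (deleteVerts G {v}) (isGraph_deleteVerts hG {v})
        (by simpa using kconn_deleteVert hG hconn hdeg2 hvV (by omega))
        (by simpa using red_deleteVert hG hred hdeg2 hvV (by omega))
        (by rw [hsupp', Set.ncard_diff_singleton_of_mem hvV]; omega)
        (deleteVerts E₁ {v}) (deleteVerts E₂ {v})
        (hdisj.mono (deleteVerts_subset E₁ {v}) (deleteVerts_subset E₂ {v}))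
        (by rw [← deleteVerts_union_distrib, hunion])
      omega
    -- condition (A) holds at every vertex of the intersection
    have hAall : ∀ v ∈ V₁ ∩ V₂,
        d + 1 ≤ min (deg E₁ v) d + min (deg E₂ v) d := by
      intro v hv
      have h1 : 1 ≤ deg E₁ v := deg_pos_of_mem_eSupp hE₁fin hv.1
      have h2 : 1 ≤ deg E₂ v := deg_pos_of_mem_eSupp hE₂fin hv.2
      have h3 := hdegG v (hV₁sub hv.1)
      have h4 := hdegsplit v
      omega
    -- one-side rank upper bound if the other side misses a vertex
    have hmiss : ∀ (E' : Set (Sym2 ℕ)), E' ⊆ G → (∀ e ∈ E', ¬ e.IsDiag) →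
        ∀ x ∈ V, x ∉ eSupp E' → mrk M.M E' + d ≤ rG := by
      intro E' hE'G hE'gr x hxV hxE'
      have hE'fin : E'.Finite := hGfin.subset hE'G
      have h1 : mrk M.M E' ≤ mrk M.M (clique (V \ {x})) := by
        apply mrk_mono (clique_finite (hVfin.sdiff (t := {x})))
        refine (subset_clique_eSupp hE'gr).trans (clique_mono ?_)
        intro u hu
        exact ⟨eSupp_mono hE'G hu, fun h => hxE' (h ▸ hu)⟩
      have h2 : mrk M.M (clique V) = mrk M.M (clique (V \ {x})) + d :=
        mrk_clique_remove_eq hd ht hVfin hxV (by omega)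
      omega
    -- the main case analysis
    by_cases hfull₂ : ∀ x ∈ V, x ∈ V₂
    · by_cases hfull₁ : ∀ x ∈ V, x ∈ V₁
      · -- Case III : both sides span V
        have hWV : ∀ x ∈ V, x ∈ V₁ ∩ V₂ := fun x hx => ⟨hfull₁ x hx, hfull₂ x hx⟩
        -- first candidate: minimiser of deg E₁
        obtain ⟨v₁, hv₁V₁, hv₁min⟩ := Set.exists_min_image V₁ (deg E₁)
          (hVfin.subset hV₁sub) (eSupp_nonempty hE₁ne)
        have hv₁V : v₁ ∈ V := hV₁sub hv₁V₁
        have hv₁W : v₁ ∈ V₁ ∩ V₂ := hWV v₁ hv₁V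
        have hr₁δ : deg E₁ v₁ ≤ r₁ := by
          apply mrk_ge_of_min_degree hd hd1 (deg E₁ v₁) E₁ hE₁fin hE₁gr hE₁ne
          intro u hu
          exact hv₁min u hu
        have hB₁ : k + 1 + d ≤ r₁ + min (deg E₂ v₁) d := by
          have h3 := hdegG v₁ hv₁V
          have h4 := hdegsplit v₁
          omega
        by_cases hC₁ : k + 1 + d ≤ r₂ + min (deg E₁ v₁) d
        · exact engine v₁ hv₁W (hAall v₁ hv₁W) hB₁ hC₁
        · push_neg at hC₁
          obtain ⟨v₂, hv₂V₂, hv₂min⟩ := Set.exists_min_image V₂ (deg E₂)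
            (hVfin.subset hV₂sub) (eSupp_nonempty hE₂ne)
          have hv₂V : v₂ ∈ V := hV₂sub hv₂V₂
          have hv₂W : v₂ ∈ V₁ ∩ V₂ := hWV v₂ hv₂V
          have hr₂δ : deg E₂ v₂ ≤ r₂ := by
            apply mrk_ge_of_min_degree hd hd1 (deg E₂ v₂) E₂ hE₂fin hE₂gr hE₂ne
            intro u hu
            exact hv₂min u hu
          have hC₂ : k + 1 + d ≤ r₂ + min (deg E₁ v₂) d := by
            have h3 := hdegG v₂ hv₂V
            have h4 := hdegsplit v₂
            omega
          by_cases hB₂ : k + 1 + d ≤ r₁ + min (deg E₂ v₂) d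
          · exact engine v₂ hv₂W (hAall v₂ hv₂W) hB₂ hC₂
          · push_neg at hB₂
            -- numeric contradiction via the quadratic clique bound
            have hquad := mrk_clique_quad hd n V hVfin rfl
            rw [← hrGV] at hquad
            have hc₁pos : 1 ≤ min (deg E₁ v₁) d := by
              have := deg_pos_of_mem_eSupp hE₁fin hv₁W.1
              omega
            have hc₂pos : 1 ≤ min (deg E₂ v₂) d := by
              have := deg_pos_of_mem_eSupp hE₂fin hv₂W.2
              omega
            have hfin := numeric_final d (k + 1) hd1 (by omega)
            nlinarith [hquad, hfin, heq, hC₁, hB₂, hc₁pos, hc₂pos, hn, htd, hd1]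
      · -- Case II' : E₂ spans V, E₁ misses a vertex
        push_neg at hfull₁
        obtain ⟨x, hxV, hxV₁⟩ := hfull₁
        have hr₁up : r₁ + d ≤ rG :=
          hmiss E₁ (hunion ▸ Set.subset_union_left) hE₁gr x hxV hxV₁
        have hr₂big : k + 1 + d - 1 ≤ r₂ := by omega
        -- choose the minimiser of deg E₂ on V₂ ∩ V₁ = V₁
        obtain ⟨v₁, hv₁V₁, hv₁min⟩ := Set.exists_min_image V₁ (deg E₁)
          (hVfin.subset hV₁sub) (eSupp_nonempty hE₁ne)
        have hv₁V : v₁ ∈ V := hV₁sub hv₁V₁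
        have hv₁W : v₁ ∈ V₁ ∩ V₂ := ⟨hv₁V₁, hfull₂ v₁ hv₁V⟩
        have hr₁δ : deg E₁ v₁ ≤ r₁ := by
          apply mrk_ge_of_min_degree hd hd1 (deg E₁ v₁) E₁ hE₁fin hE₁gr hE₁ne
          intro u hu
          exact hv₁min u hu
        have hB : k + 1 + d ≤ r₁ + min (deg E₂ v₁) d := by
          have h3 := hdegG v₁ hv₁V
          have h4 := hdegsplit v₁
          omega
        have hC : k + 1 + d ≤ r₂ + min (deg E₁ v₁) d := by
          have := deg_pos_of_mem_eSupp hE₁fin hv₁W.1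
          omega
        exact engine v₁ hv₁W (hAall v₁ hv₁W) hB hC
    · -- E₂ misses a vertex
      push_neg at hfull₂
      obtain ⟨x, hxV, hxV₂⟩ := hfull₂
      have hr₂up : r₂ + d ≤ rG :=
        hmiss E₂ (hunion ▸ Set.subset_union_right) hE₂gr x hxV hxV₂
      have hr₁big : k + 1 + d - 1 ≤ r₁ := by omega
      by_cases hfull₁ : ∀ x ∈ V, x ∈ V₁
      · -- Case II : E₁ spans V, E₂ misses a vertex
        obtain ⟨v₂, hv₂V₂, hv₂min⟩ := Set.exists_min_image V₂ (deg E₂)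
          (hVfin.subset hV₂sub) (eSupp_nonempty hE₂ne)
        have hv₂V : v₂ ∈ V := hV₂sub hv₂V₂
        have hv₂W : v₂ ∈ V₁ ∩ V₂ := ⟨hfull₁ v₂ hv₂V, hv₂V₂⟩
        have hr₂δ : deg E₂ v₂ ≤ r₂ := by
          apply mrk_ge_of_min_degree hd hd1 (deg E₂ v₂) E₂ hE₂fin hE₂gr hE₂ne
          intro u hu
          exact hv₂min u hu
        have hC : k + 1 + d ≤ r₂ + min (deg E₁ v₂) d := by
          have h3 := hdegG v₂ hv₂V
          have h4 := hdegsplit v₂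
          omega
        have hB : k + 1 + d ≤ r₁ + min (deg E₂ v₂) d := by
          have := deg_pos_of_mem_eSupp hE₂fin hv₂W.2
          omega
        exact engine v₂ hv₂W (hAall v₂ hv₂W) hB hC
      · -- Case I : both sides miss a vertex
        push_neg at hfull₁
        obtain ⟨y, hyV, hyV₁⟩ := hfull₁
        have hr₁up : r₁ + d ≤ rG :=
          hmiss E₁ (hunion ▸ Set.subset_union_left) hE₁gr y hyV hyV₁
        have hr₂big : k + 1 + d - 1 ≤ r₂ := by omega
        have hB : k + 1 + d ≤ r₁ + min (deg E₂ w) d := by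
          have := deg_pos_of_mem_eSupp hE₂fin hwW.2
          omega
        have hC : k + 1 + d ≤ r₂ + min (deg E₁ w) d := by
          have := deg_pos_of_mem_eSupp hE₁fin hwW.1
          omega
        exact engine w hwW (hAall w hwW) hB hC

end MainAux

/-- Let `G` be a graph and `M` a nontrivial, unbounded graph matroid
family with dimensionality `d` and threshold `t`.  If `G` is `k`-connected,
`k`-vertex-redundantly `M`-rigid, and has at least `k + t` vertices, then `M(G)` is
vertically `(k+1)`-connected. -/
theorem redundantly_rigid_vertically_connected (M : GraphMatroidFamily) (d t : ℕ)
    (hu : M.Unbounded) (hnt : ¬ M.Trivial)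
    (hd : M.IsDimensionality d) (ht : M.IsThreshold d t)
    (G : Set (Sym2 ℕ)) (hG : IsGraph G) (k : ℕ)
    (hconn : KConnected k G) (hred : M.VertexRedundantlyRigid k G)
    (hcard : k + t ≤ (eSupp G).ncard) :
    VerticallyConnected (M.M.restrict G) (k + 1) := by
  have hd1 : 1 ≤ d := CliqueAux.dim_pos hu hd ht
  have htd : d + 1 ≤ t := CliqueAux.threshold_ge ht
  have hGfin : G.Finite := hG.1
  have hVfin : (eSupp G).Finite := GraphAux.eSupp_finite hGfin
  have hrestr : ∀ X : Set (Sym2 ℕ), X ⊆ G → mrk (M.M.restrict G) X = mrk M.M X :=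
    fun X hX => MrkAux.mrk_restrict hX
  have hground : (M.M.restrict G).E = G := rfl
  have hrGclique : mrk M.M G = mrk M.M (clique (eSupp G)) := hred.1
  have hrank : k + 1 ≤ mrk M.M G := by
    have h1 : (eSupp G).ncard ≤ mrk M.M (clique (eSupp G)) + 1 :=
      CliqueAux.mrk_clique_ge_card hd hd1 (eSupp G).ncard (eSupp G) hVfin rfl
    omega
  constructor
  · rw [hground, hrestr G subset_rfl]
    exact hrank
  · rintro k' hk'pos hk' E₁ E₂ ⟨hdisj, hunion, h1, h2, h3⟩
    rw [hground] at hunion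
    have hE₁G : E₁ ⊆ G := hunion ▸ Set.subset_union_left
    have hE₂G : E₂ ⊆ G := hunion ▸ Set.subset_union_right
    rw [hrestr E₁ hE₁G] at h1 h3
    rw [hrestr E₂ hE₂G] at h2 h3
    rw [hground, hrestr G subset_rfl] at h3
    have hmain := MainAux.main_P M d t hu hd ht k G hG hconn hred hcard E₁ E₂ hdisj hunion
    have hk'k : k' ≤ k := by omega
    omega
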